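/- arXiv:math/0604180 — 3 statements merged into one kernel-verified Lean document; each statement's English description precedes it below -/
import Mathlib

section
/- Let T be a monad on a category C. For a natural transformation a : 1_C → T, define L_a, R_a : T → T by (L_a)_X = μ_X ∘ a_{T(X)} and (R_a)_X = μ_X ∘ T(a_X). Then the following are equivalent: (i) L_a = R_a; (ii) for every T-module (M,r), the morphism r ∘ a_M : M → M is T-linear; (iii) there exists a (necessarily unique) natural transformation ã : 1_{T\text{-}C} → 1_{T\text{-}C} of the identity functor of the Eilenberg–Moore category with U_T(ã)_{(M,r)} = r ∘ a_M. -/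
open CategoryTheory

lemma central_iff_linear {C : Type*} [Category C] (T : Monad C) (a : 𝟭 C ⟶ T.toFunctor) :
    (∀ X : C, a.app (T.obj X) ≫ T.μ.app X = T.map (a.app X) ≫ T.μ.app X) ↔
      (∀ M : T.Algebra,
        M.a ≫ (a.app M.A ≫ M.a) = T.map (a.app M.A ≫ M.a) ≫ M.a) := by
  constructor
  · intro hc M
    have hnat : M.a ≫ a.app M.A = a.app (T.obj M.A) ≫ T.map M.a := by
      simpa using a.naturality M.a
    calc M.a ≫ (a.app M.A ≫ M.a)
        = (M.a ≫ a.app M.A) ≫ M.a := by simp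
      _ = (a.app (T.obj M.A) ≫ T.map M.a) ≫ M.a := by rw [hnat]
      _ = a.app (T.obj M.A) ≫ (T.μ.app M.A ≫ M.a) := by
            rw [Category.assoc, ← M.assoc]
      _ = (a.app (T.obj M.A) ≫ T.μ.app M.A) ≫ M.a := by simp
      _ = (T.map (a.app M.A) ≫ T.μ.app M.A) ≫ M.a := by rw [hc]
      _ = T.map (a.app M.A) ≫ T.map M.a ≫ M.a := by rw [Category.assoc, M.assoc]
      _ = T.map (a.app M.A ≫ M.a) ≫ M.a := by simp [T.toFunctor.map_comp]
  · intro h X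
    have := h (T.free.obj X)
    -- the free algebra has carrier T.obj X and structure map μ_X
    simp only [Monad.free_obj_A, Monad.free_obj_a] at this
    have h2 := congrArg (fun g => T.map (T.η.app X) ≫ g) this
    have lhs : T.map (T.η.app X) ≫ T.μ.app X ≫ a.app (T.obj X) ≫ T.μ.app X
        = a.app (T.obj X) ≫ T.μ.app X := by
      rw [← Category.assoc, T.right_unit]; simp
    have inner : T.η.app X ≫ a.app (T.obj X) ≫ T.μ.app X = a.app X := by
      have hn : T.η.app X ≫ a.app (T.obj X) = a.app X ≫ T.map (T.η.app X) := by
        simpa using a.naturality (T.η.app X)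
      rw [← Category.assoc, hn, Category.assoc]
      simp
    have rhs : T.map (T.η.app X) ≫ T.map (a.app (T.obj X) ≫ T.μ.app X) ≫ T.μ.app X
        = T.map (a.app X) ≫ T.μ.app X := by
      calc T.map (T.η.app X) ≫ T.map (a.app (T.obj X) ≫ T.μ.app X) ≫ T.μ.app X
          = T.map (T.η.app X ≫ a.app (T.obj X) ≫ T.μ.app X) ≫ T.μ.app X := by
            simp [T.toFunctor.map_comp]
        _ = T.map (a.app X) ≫ T.μ.app X := by rw [inner]
    calc a.app (T.obj X) ≫ T.μ.app X
        = T.map (T.η.app X) ≫ T.μ.app X ≫ a.app (T.obj X) ≫ T.μ.app X := lhs.symm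
      _ = T.map (T.η.app X) ≫ T.map (a.app (T.obj X) ≫ T.μ.app X) ≫ T.μ.app X := by
            exact h2
      _ = T.map (a.app X) ≫ T.μ.app X := rhs

/-- For a monad `T` on `C` and `a : 𝟭 C ⟶ T`, the following are
equivalent: (i) `L_a = R_a` (i.e. `a` is a central element of `T`), where
`(L_a)_X = μ_X ∘ a_{T X}` and `(R_a)_X = μ_X ∘ T(a_X)`;
(ii) for every `T`-module `(M,r)`, the morphism `r ∘ a_M : M ⟶ M` is `T`-linear;
(iii) there is a (necessarily unique) natural transformation `atil` of the identity
functor of the Eilenberg–Moore category with `U_T(atil)_{(M,r)} = r ∘ a_M`. -/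
theorem stmt1 {C : Type*} [Category C] (T : Monad C) (a : 𝟭 C ⟶ T.toFunctor) :
    ((∀ X : C, a.app (T.obj X) ≫ T.μ.app X = T.map (a.app X) ≫ T.μ.app X) ↔
      (∀ M : T.Algebra,
        M.a ≫ (a.app M.A ≫ M.a) = T.map (a.app M.A ≫ M.a) ≫ M.a)) ∧
    ((∀ X : C, a.app (T.obj X) ≫ T.μ.app X = T.map (a.app X) ≫ T.μ.app X) ↔
      (∃! atil : 𝟭 T.Algebra ⟶ 𝟭 T.Algebra,
        ∀ M : T.Algebra, (atil.app M).f = a.app M.A ≫ M.a)) := by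
  have key := central_iff_linear T a
  refine ⟨key, key.trans ?_⟩
  constructor
  · intro h
    refine ⟨{ app := fun M => ⟨a.app M.A ≫ M.a, (h M).symm⟩
              naturality := ?_ }, fun M => rfl, ?_⟩
    · intro M N f
      ext
      have hn : f.f ≫ a.app N.A = a.app M.A ≫ T.map f.f := by
        simpa using a.naturality f.f
      simp only [Functor.id_obj, Functor.id_map, Monad.Algebra.comp_f]
      calc f.f ≫ a.app N.A ≫ N.a = (f.f ≫ a.app N.A) ≫ N.a := by simp
        _ = (a.app M.A ≫ T.map f.f) ≫ N.a := by rw [hn]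
        _ = a.app M.A ≫ (T.map f.f ≫ N.a) := by simp
        _ = a.app M.A ≫ (M.a ≫ f.f) := by rw [f.h]
        _ = (a.app M.A ≫ M.a) ≫ f.f := by simp
    · intro b hb
      ext M : 2
      exact Monad.Algebra.Hom.ext (by simpa using hb M)
  · rintro ⟨atil, hat, -⟩ M
    have := (atil.app M).h
    rw [hat M] at this
    exact this.symm
end

section
/- Let T be a bimonad on a monoidal category C which admits a left antipode s^l. Then s^l is compatible with the monad structure: s^l_X ∘ μ_{ˡT(X)} = s^l_X ∘ T(s^l_{T(X)}) ∘ T²(ˡμ_X) and s^l_X ∘ η_{ˡT(X)} = ˡη_X for all objects X, where ˡf denotes the left dual (transpose) of a morphism f. -/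
open CategoryTheory MonoidalCategory

namespace HopfMonadPaper

variable {C : Type*} [Category C] [MonoidalCategory C]

/-- A comonoidal (oplax monoidal) structure on an endofunctor `T`,
with coproduct `δ X Y : T(X ⊗ Y) ⟶ T(X) ⊗ T(Y)` and counit `ε : T(𝟙) ⟶ 𝟙`. -/
structure Comonoidal (T : C ⥤ C) where
  δ : ∀ X Y : C, T.obj (X ⊗ Y) ⟶ T.obj X ⊗ T.obj Y
  ε : T.obj (𝟙_ C) ⟶ 𝟙_ C
  δ_natural : ∀ {X X' Y Y' : C} (f : X ⟶ X') (g : Y ⟶ Y'),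
    T.map (f ⊗ₘ g) ≫ δ X' Y' = δ X Y ≫ (T.map f ⊗ₘ T.map g)
  coassoc : ∀ X Y Z : C,
    δ (X ⊗ Y) Z ≫ (δ X Y ⊗ₘ 𝟙 (T.obj Z)) ≫ (α_ (T.obj X) (T.obj Y) (T.obj Z)).hom
      = T.map (α_ X Y Z).hom ≫ δ X (Y ⊗ Z) ≫ (𝟙 (T.obj X) ⊗ₘ δ Y Z)
  counit_left : ∀ X : C,
    δ (𝟙_ C) X ≫ (ε ⊗ₘ 𝟙 (T.obj X)) ≫ (λ_ (T.obj X)).hom = T.map (λ_ X).hom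
  counit_right : ∀ X : C,
    δ X (𝟙_ C) ≫ (𝟙 (T.obj X) ⊗ₘ ε) ≫ (ρ_ (T.obj X)).hom = T.map (ρ_ X).hom

/-- The bimonad axioms: the product and unit of the monad are comonoidal. -/
structure IsBimonad (T : Monad C) (Q : Comonoidal T.toFunctor) : Prop where
  mu_δ : ∀ X Y : C, T.μ.app (X ⊗ Y) ≫ Q.δ X Y
    = T.map (Q.δ X Y) ≫ Q.δ (T.obj X) (T.obj Y) ≫ (T.μ.app X ⊗ₘ T.μ.app Y)
  mu_ε : T.μ.app (𝟙_ C) ≫ Q.ε = T.map Q.ε ≫ Q.ε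
  eta_δ : ∀ X Y : C, T.η.app (X ⊗ Y) ≫ Q.δ X Y = T.η.app X ⊗ₘ T.η.app Y
  eta_ε : T.η.app (𝟙_ C) ≫ Q.ε = 𝟙 (𝟙_ C)

/-- A choice of left duals: `d X = ˡX` with evaluation `ev X : ˡX ⊗ₘ X ⟶ 𝟙`
and coevaluation `coev X : 𝟙 ⟶ X ⊗ₘ ˡX`, satisfying the triangle identities. -/
structure LeftDualData (C : Type*) [Category C] [MonoidalCategory C] where
  d : C → C
  ev : ∀ X : C, d X ⊗ X ⟶ 𝟙_ C
  coev : ∀ X : C, 𝟙_ C ⟶ X ⊗ d X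
  tri1 : ∀ X : C, (ρ_ (d X)).inv ≫ (𝟙 (d X) ⊗ₘ coev X) ≫ (α_ (d X) X (d X)).inv
    ≫ (ev X ⊗ₘ 𝟙 (d X)) ≫ (λ_ (d X)).hom = 𝟙 (d X)
  tri2 : ∀ X : C, (λ_ X).inv ≫ (coev X ⊗ₘ 𝟙 X) ≫ (α_ X (d X) X).hom
    ≫ (𝟙 X ⊗ₘ ev X) ≫ (ρ_ X).hom = 𝟙 X

/-- Left transpose (left dual) of a morphism. -/
def LeftDualData.tr (L : LeftDualData C) {X Y : C} (f : X ⟶ Y) : L.d Y ⟶ L.d X :=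
  (ρ_ (L.d Y)).inv ≫ (𝟙 (L.d Y) ⊗ₘ L.coev X) ≫ (𝟙 (L.d Y) ⊗ₘ (f ⊗ₘ 𝟙 (L.d X)))
    ≫ (α_ (L.d Y) Y (L.d X)).inv ≫ (L.ev Y ⊗ₘ 𝟙 (L.d X)) ≫ (λ_ (L.d X)).hom

/-- A choice of right duals: `d X = ʳX` with evaluation `ev X : X ⊗ₘ ʳX ⟶ 𝟙`
and coevaluation `coev X : 𝟙 ⟶ ʳX ⊗ₘ X`, satisfying the triangle identities. -/
structure RightDualData (C : Type*) [Category C] [MonoidalCategory C] where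
  d : C → C
  ev : ∀ X : C, X ⊗ d X ⟶ 𝟙_ C
  coev : ∀ X : C, 𝟙_ C ⟶ d X ⊗ X
  tri1 : ∀ X : C, (ρ_ X).inv ≫ (𝟙 X ⊗ₘ coev X) ≫ (α_ X (d X) X).inv
    ≫ (ev X ⊗ₘ 𝟙 X) ≫ (λ_ X).hom = 𝟙 X
  tri2 : ∀ X : C, (λ_ (d X)).inv ≫ (coev X ⊗ₘ 𝟙 (d X)) ≫ (α_ (d X) X (d X)).hom
    ≫ (𝟙 (d X) ⊗ₘ ev X) ≫ (ρ_ (d X)).hom = 𝟙 (d X)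

/-- Right transpose (right dual) of a morphism. -/
def RightDualData.tr (R : RightDualData C) {X Y : C} (f : X ⟶ Y) : R.d Y ⟶ R.d X :=
  (λ_ (R.d Y)).inv ≫ (R.coev X ⊗ₘ 𝟙 (R.d Y)) ≫ (α_ (R.d X) X (R.d Y)).hom
    ≫ (𝟙 (R.d X) ⊗ₘ (f ⊗ₘ 𝟙 (R.d Y))) ≫ (𝟙 (R.d X) ⊗ₘ R.ev Y) ≫ (ρ_ (R.d X)).hom

/-- The axioms for a left antipode `s X : T(ˡT(X)) ⟶ ˡX` of a bimonad. -/
structure IsLeftAntipode (T : Monad C) (Q : Comonoidal T.toFunctor) (L : LeftDualData C)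
    (s : ∀ X : C, T.obj (L.d (T.obj X)) ⟶ L.d X) : Prop where
  natural : ∀ {X Y : C} (f : X ⟶ Y),
    T.map (L.tr (T.map f)) ≫ s X = s Y ≫ L.tr f
  lant1 : ∀ X : C,
    T.map (L.tr (T.η.app X) ⊗ₘ 𝟙 X) ≫ T.map (L.ev X) ≫ Q.ε
      = Q.δ (L.d (T.obj X)) X
        ≫ ((T.map (L.tr (T.μ.app X)) ≫ s (T.obj X)) ⊗ₘ 𝟙 (T.obj X)) ≫ L.ev (T.obj X)
  lant2 : ∀ X : C,
    Q.ε ≫ L.coev X ≫ (T.η.app X ⊗ₘ 𝟙 (L.d X))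
      = T.map (L.coev (T.obj X)) ≫ Q.δ (T.obj X) (L.d (T.obj X)) ≫ (T.μ.app X ⊗ₘ s X)

/-- The axioms for a right antipode `s X : T(ʳT(X)) ⟶ ʳX` of a bimonad. -/
structure IsRightAntipode (T : Monad C) (Q : Comonoidal T.toFunctor) (R : RightDualData C)
    (s : ∀ X : C, T.obj (R.d (T.obj X)) ⟶ R.d X) : Prop where
  natural : ∀ {X Y : C} (f : X ⟶ Y),
    T.map (R.tr (T.map f)) ≫ s X = s Y ≫ R.tr f
  rant1 : ∀ X : C,
    T.map (𝟙 X ⊗ₘ R.tr (T.η.app X)) ≫ T.map (R.ev X) ≫ Q.ε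
      = Q.δ X (R.d (T.obj X))
        ≫ (𝟙 (T.obj X) ⊗ₘ (T.map (R.tr (T.μ.app X)) ≫ s (T.obj X))) ≫ R.ev (T.obj X)
  rant2 : ∀ X : C,
    Q.ε ≫ R.coev X ≫ (𝟙 (R.d X) ⊗ₘ T.η.app X)
      = T.map (R.coev (T.obj X)) ≫ Q.δ (R.d (T.obj X)) (T.obj X) ≫ (s X ⊗ₘ T.μ.app X)

/-- The canonical morphism `X ⟶ ʳ(ˡX)`. -/
def canRL (L : LeftDualData C) (R : RightDualData C) (X : C) : X ⟶ R.d (L.d X) :=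
  (λ_ X).inv ≫ (R.coev (L.d X) ⊗ₘ 𝟙 X) ≫ (α_ (R.d (L.d X)) (L.d X) X).hom
    ≫ (𝟙 (R.d (L.d X)) ⊗ₘ L.ev X) ≫ (ρ_ (R.d (L.d X))).hom

/-- The canonical morphism `ʳ(ˡX) ⟶ X`. -/
def canRLinv (L : LeftDualData C) (R : RightDualData C) (X : C) : R.d (L.d X) ⟶ X :=
  (λ_ (R.d (L.d X))).inv ≫ (L.coev X ⊗ₘ 𝟙 (R.d (L.d X)))
    ≫ (α_ X (L.d X) (R.d (L.d X))).hom ≫ (𝟙 X ⊗ₘ R.ev (L.d X)) ≫ (ρ_ X).hom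

/-- The canonical morphism `X ⟶ ˡ(ʳX)`. -/
def canLR (L : LeftDualData C) (R : RightDualData C) (X : C) : X ⟶ L.d (R.d X) :=
  (ρ_ X).inv ≫ (𝟙 X ⊗ₘ L.coev (R.d X)) ≫ (α_ X (R.d X) (L.d (R.d X))).inv
    ≫ (R.ev X ⊗ₘ 𝟙 (L.d (R.d X))) ≫ (λ_ (L.d (R.d X))).hom

/-- The canonical morphism `ˡ(ʳX) ⟶ X`. -/
def canLRinv (L : LeftDualData C) (R : RightDualData C) (X : C) : L.d (R.d X) ⟶ X :=
  (ρ_ (L.d (R.d X))).inv ≫ (𝟙 (L.d (R.d X)) ⊗ₘ R.coev X)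
    ≫ (α_ (L.d (R.d X)) (R.d X) X).inv ≫ (L.ev (R.d X) ⊗ₘ 𝟙 X) ≫ (λ_ X).hom


namespace LeftDualData

variable (L : LeftDualData C)

def pairing (X : C) : ExactPairing X (L.d X) where
  coevaluation' := L.coev X
  evaluation' := L.ev X
  coevaluation_evaluation' := by
    have h := L.tri1 X
    simp only [tensorHom_id, id_tensorHom] at h
    rw [Iso.inv_comp_eq] at h
    simp only [Category.comp_id] at h
    rw [← h]; simp
  evaluation_coevaluation' := by
    have h := L.tri2 X
    simp only [tensorHom_id, id_tensorHom] at h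
    rw [Iso.inv_comp_eq] at h
    simp only [Category.comp_id] at h
    rw [← h]; simp

def hrd (X : C) : HasRightDual X := @HasRightDual.mk _ _ _ X (L.d X) (L.pairing X)

lemma tr_eq {X Y : C} (f : X ⟶ Y) :
    L.tr f = @rightAdjointMate C _ _ X Y (L.hrd X) (L.hrd Y) f := by
  dsimp [tr, rightAdjointMate, ExactPairing.coevaluation, ExactPairing.evaluation, hrd, pairing]
  simp [tensorHom_id, id_tensorHom]
  rfl

lemma tr_id (X : C) : L.tr (𝟙 X) = 𝟙 (L.d X) := by
  rw [tr_eq]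
  exact @rightAdjointMate_id C _ _ X (L.hrd X)

lemma tr_comp {X Y Z : C} (f : X ⟶ Y) (g : Y ⟶ Z) : L.tr (f ≫ g) = L.tr g ≫ L.tr f := by
  rw [tr_eq, tr_eq, tr_eq]
  exact @comp_rightAdjointMate C _ _ X Y Z (L.hrd X) (L.hrd Y) (L.hrd Z) f g

lemma ev_tr {X Y : C} (f : X ⟶ Y) :
    (L.tr f ⊗ₘ 𝟙 X) ≫ L.ev X = (𝟙 (L.d Y) ⊗ₘ f) ≫ L.ev Y := by
  have h := @rightAdjointMate_comp_evaluation C _ _ X Y (L.hrd X) (L.hrd Y) f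
  rw [← tr_eq] at h
  simp [tensorHom_id, id_tensorHom, ExactPairing.evaluation, hrd, pairing] at h ⊢
  exact h

lemma coev_tr {X Y : C} (f : X ⟶ Y) :
    L.coev X ≫ (f ⊗ₘ 𝟙 (L.d X)) = L.coev Y ≫ (𝟙 Y ⊗ₘ L.tr f) := by
  have h := @coevaluation_comp_rightAdjointMate C _ _ X Y (L.hrd X) (L.hrd Y) f
  rw [← tr_eq] at h
  simp [tensorHom_id, id_tensorHom, ExactPairing.coevaluation, hrd, pairing] at h ⊢
  exact h.symm

end LeftDualData

set_option maxHeartbeats 1000000 in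
lemma sandwich {S : C ⥤ C} (QS : Comonoidal S) {D M : C}
    (ev : D ⊗ M ⟶ 𝟙_ C) (coev : 𝟙_ C ⟶ M ⊗ D)
    (tri : (ρ_ D).inv ≫ (𝟙 D ⊗ₘ coev) ≫ (α_ D M D).inv
      ≫ (ev ⊗ₘ 𝟙 D) ≫ (λ_ D).hom = 𝟙 D)
    (m : S.obj M ⟶ M) (f g : S.obj D ⟶ D)
    (hf : QS.δ D M ≫ (f ⊗ₘ m) ≫ ev = S.map ev ≫ QS.ε)
    (hg : QS.ε ≫ coev = S.map coev ≫ QS.δ M D ≫ (m ⊗ₘ g)) : f = g := by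
  have tri' : (ρ_ D).inv ≫ ((𝟙 D ⊗ₘ coev) ≫ ((α_ D M D).inv ≫ ((ev ⊗ₘ 𝟙 D) ≫ (λ_ D).hom)))
      = 𝟙 D := by simpa [Category.assoc] using tri
  have key1 : S.map (ρ_ D).inv ≫ S.map (𝟙 D ⊗ₘ coev) ≫ S.map (α_ D M D).inv
      ≫ QS.δ (D ⊗ M) D ≫ ((S.map ev ≫ QS.ε) ⊗ₘ g) ≫ (λ_ D).hom = g := by
    have e1 : ((S.map ev ≫ QS.ε) ⊗ₘ g) = (S.map ev ⊗ₘ 𝟙 (S.obj D)) ≫ (QS.ε ⊗ₘ 𝟙 (S.obj D))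
        ≫ (𝟙 (𝟙_ C) ⊗ₘ g) := by
      rw [tensorHom_comp_tensorHom, tensorHom_comp_tensorHom]; simp
    rw [e1]
    have e2 : QS.δ (D ⊗ M) D ≫ (S.map ev ⊗ₘ 𝟙 (S.obj D))
        = S.map (ev ⊗ₘ 𝟙 D) ≫ QS.δ (𝟙_ C) D := by
      simpa using (QS.δ_natural ev (𝟙 D)).symm
    slice_lhs 4 5 => rw [e2]
    have e3 : (𝟙 (𝟙_ C) ⊗ₘ g) ≫ (λ_ D).hom = (λ_ (S.obj D)).hom ≫ g := by
      simp
    slice_lhs 7 8 => rw [e3]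
    slice_lhs 5 7 => rw [QS.counit_left D]
    slice_lhs 1 5 => rw [← S.map_comp, ← S.map_comp, ← S.map_comp, ← S.map_comp]
    rw [tri']
    simp
  have key2 : S.map (ρ_ D).inv ≫ S.map (𝟙 D ⊗ₘ coev) ≫ S.map (α_ D M D).inv
      ≫ QS.δ (D ⊗ M) D ≫ ((S.map ev ≫ QS.ε) ⊗ₘ g) ≫ (λ_ D).hom = f := by
    rw [← hf]
    have e1 : ((QS.δ D M ≫ (f ⊗ₘ m) ≫ ev) ⊗ₘ g) = (QS.δ D M ⊗ₘ 𝟙 (S.obj D))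
        ≫ (α_ (S.obj D) (S.obj M) (S.obj D)).hom ≫ (α_ (S.obj D) (S.obj M) (S.obj D)).inv
        ≫ (((f ⊗ₘ m) ≫ ev) ⊗ₘ g) := by
      rw [Iso.hom_inv_id_assoc, tensorHom_comp_tensorHom]; simp
    rw [e1]
    slice_lhs 4 6 => rw [QS.coassoc D M D]
    have e3 : (α_ (S.obj D) (S.obj M) (S.obj D)).inv ≫ (((f ⊗ₘ m) ≫ ev) ⊗ₘ g)
        = (f ⊗ₘ (m ⊗ₘ g)) ≫ (α_ D M D).inv ≫ (ev ⊗ₘ 𝟙 D) := by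
      have h1 : (((f ⊗ₘ m) ≫ ev) ⊗ₘ g) = ((f ⊗ₘ m) ⊗ₘ g) ≫ (ev ⊗ₘ 𝟙 D) := by
        rw [tensorHom_comp_tensorHom]; simp
      rw [h1, ← associator_inv_naturality_assoc]
    slice_lhs 3 4 => rw [← S.map_comp, Iso.inv_hom_id, S.map_id]
    rw [Category.id_comp]
    slice_lhs 5 6 => rw [e3]
    have e4 : (𝟙 (S.obj D) ⊗ₘ QS.δ M D) ≫ (f ⊗ₘ (m ⊗ₘ g)) = (f ⊗ₘ (QS.δ M D ≫ (m ⊗ₘ g))) := by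
      rw [tensorHom_comp_tensorHom]; simp
    slice_lhs 4 5 => rw [e4]
    have e5 : S.map (𝟙 D ⊗ₘ coev) ≫ QS.δ D (M ⊗ D)
        = QS.δ D (𝟙_ C) ≫ (𝟙 (S.obj D) ⊗ₘ S.map coev) := by
      simpa using QS.δ_natural (𝟙 D) coev
    slice_lhs 2 3 => rw [e5]
    have e6 : (𝟙 (S.obj D) ⊗ₘ S.map coev) ≫ (f ⊗ₘ (QS.δ M D ≫ (m ⊗ₘ g)))
        = (f ⊗ₘ (S.map coev ≫ QS.δ M D ≫ (m ⊗ₘ g))) := by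
      rw [tensorHom_comp_tensorHom]; simp
    slice_lhs 3 4 => rw [e6]
    rw [← hg]
    have e7 : (f ⊗ₘ (QS.ε ≫ coev)) = (𝟙 (S.obj D) ⊗ₘ QS.ε) ≫ (f ⊗ₘ coev) := by
      rw [tensorHom_comp_tensorHom]; simp
    rw [e7]
    have e8 : QS.δ D (𝟙_ C) ≫ (𝟙 (S.obj D) ⊗ₘ QS.ε) = S.map (ρ_ D).hom ≫ (ρ_ (S.obj D)).inv := by
      rw [Iso.eq_comp_inv, Category.assoc, QS.counit_right D]
    slice_lhs 2 3 => rw [e8]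
    slice_lhs 1 2 => rw [← S.map_comp, Iso.inv_hom_id, S.map_id]
    rw [Category.id_comp]
    have e9 : (ρ_ (S.obj D)).inv ≫ (f ⊗ₘ coev) = f ≫ (ρ_ D).inv ≫ (𝟙 D ⊗ₘ coev) := by
      have h1 : (f ⊗ₘ coev) = (f ⊗ₘ 𝟙 (𝟙_ C)) ≫ (𝟙 D ⊗ₘ coev) := by
        rw [tensorHom_comp_tensorHom]; simp
      rw [h1, tensorHom_id, ← rightUnitor_inv_naturality_assoc]
    slice_lhs 1 2 => rw [e9]
    simp only [Category.assoc]
    rw [tri']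
    simp
  exact key2.symm.trans key1



/-- The trivial comonoidal structure on the identity functor. -/
def idComonoidal : Comonoidal (𝟭 C) where
  δ X Y := 𝟙 _
  ε := 𝟙 _
  δ_natural f g := by simp
  coassoc X Y Z := by simp
  counit_left X := by simp
  counit_right X := by simp

variable (T : Monad C)

set_option maxHeartbeats 1000000 in
/-- The comonoidal structure on `T ⋙ T`. -/
def sqComonoidal (Q : Comonoidal T.toFunctor) : Comonoidal (T.toFunctor ⋙ T.toFunctor) where
  δ X Y := T.map (Q.δ X Y) ≫ Q.δ (T.obj X) (T.obj Y)
  ε := T.map Q.ε ≫ Q.ε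
  δ_natural {X X' Y Y'} f g := by
    dsimp
    rw [← Functor.map_comp_assoc, Q.δ_natural f g, Functor.map_comp, Category.assoc,
      Q.δ_natural]
    simp
  coassoc X Y Z := by
    dsimp
    have s1 : ((T.map (Q.δ X Y) ≫ Q.δ (T.obj X) (T.obj Y)) ⊗ₘ 𝟙 (T.obj (T.obj Z)))
        = (T.map (Q.δ X Y) ⊗ₘ 𝟙 (T.obj (T.obj Z)))
          ≫ (Q.δ (T.obj X) (T.obj Y) ⊗ₘ 𝟙 (T.obj (T.obj Z))) := by
      rw [tensorHom_comp_tensorHom]; simp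
    rw [s1]
    have s2 : Q.δ (T.obj (X ⊗ Y)) (T.obj Z) ≫ (T.map (Q.δ X Y) ⊗ₘ 𝟙 (T.obj (T.obj Z)))
        = T.map (Q.δ X Y ⊗ₘ 𝟙 (T.obj Z)) ≫ Q.δ (T.obj X ⊗ T.obj Y) (T.obj Z) := by
      simpa using (Q.δ_natural (Q.δ X Y) (𝟙 (T.obj Z))).symm
    slice_lhs 2 3 => rw [s2]
    slice_lhs 3 5 => rw [Q.coassoc (T.obj X) (T.obj Y) (T.obj Z)]
    have s4 := T.toFunctor.congr_map (Q.coassoc X Y Z)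
    simp only [Functor.map_comp] at s4
    simp only [Category.assoc]
    rw [reassoc_of% s4]
    have s5 : T.map (𝟙 (T.obj X) ⊗ₘ Q.δ Y Z) ≫ Q.δ (T.obj X) (T.obj Y ⊗ T.obj Z)
        = Q.δ (T.obj X) (T.obj (Y ⊗ Z)) ≫ (𝟙 (T.obj (T.obj X)) ⊗ₘ T.map (Q.δ Y Z)) := by
      simpa using Q.δ_natural (𝟙 (T.obj X)) (Q.δ Y Z)
    slice_lhs 3 4 => rw [s5]
    simp only [Category.assoc]
    rw [tensorHom_comp_tensorHom]
    simp
  counit_left X := by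
    dsimp
    have c1 : ((T.map Q.ε ≫ Q.ε) ⊗ₘ 𝟙 (T.obj (T.obj X)))
        = (T.map Q.ε ⊗ₘ 𝟙 (T.obj (T.obj X))) ≫ (Q.ε ⊗ₘ 𝟙 (T.obj (T.obj X))) := by
      rw [tensorHom_comp_tensorHom]; simp
    rw [c1]
    have c2 : Q.δ (T.obj (𝟙_ C)) (T.obj X) ≫ (T.map Q.ε ⊗ₘ 𝟙 (T.obj (T.obj X)))
        = T.map (Q.ε ⊗ₘ 𝟙 (T.obj X)) ≫ Q.δ (𝟙_ C) (T.obj X) := by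
      simpa using (Q.δ_natural Q.ε (𝟙 (T.obj X))).symm
    slice_lhs 2 3 => rw [c2]
    slice_lhs 3 5 => rw [Q.counit_left (T.obj X)]
    rw [← Functor.map_comp_assoc, ← Functor.map_comp, ← Q.counit_left X]
    simp
  counit_right X := by
    dsimp
    have c1 : (𝟙 (T.obj (T.obj X)) ⊗ₘ (T.map Q.ε ≫ Q.ε))
        = (𝟙 (T.obj (T.obj X)) ⊗ₘ T.map Q.ε) ≫ (𝟙 (T.obj (T.obj X)) ⊗ₘ Q.ε) := by
      rw [tensorHom_comp_tensorHom]; simp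
    rw [c1]
    have c2 : Q.δ (T.obj X) (T.obj (𝟙_ C)) ≫ (𝟙 (T.obj (T.obj X)) ⊗ₘ T.map Q.ε)
        = T.map (𝟙 (T.obj X) ⊗ₘ Q.ε) ≫ Q.δ (T.obj X) (𝟙_ C) := by
      simpa using (Q.δ_natural (𝟙 (T.obj X)) Q.ε).symm
    slice_lhs 2 3 => rw [c2]
    slice_lhs 3 5 => rw [Q.counit_right (T.obj X)]
    rw [← Functor.map_comp_assoc, ← Functor.map_comp, ← Q.counit_right X]
    simp



section Main

variable {T : Monad C} {Q : Comonoidal T.toFunctor} {L : LeftDualData C}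
  {s : ∀ X : C, T.obj (L.d (T.obj X)) ⟶ L.d X}

/-- The candidate action on `ˡT(X)`. -/
def act (T : Monad C) (L : LeftDualData C) (s : ∀ X : C, T.obj (L.d (T.obj X)) ⟶ L.d X)
    (X : C) : T.obj (L.d (T.obj X)) ⟶ L.d (T.obj X) :=
  T.map (L.tr (T.μ.app X)) ≫ s (T.obj X)

lemma act_tr_eta (hs : IsLeftAntipode T Q L s) (X : C) :
    act T L s X ≫ L.tr (T.η.app X) = s X := by
  rw [act, Category.assoc, ← hs.natural (T.η.app X), ← Functor.map_comp_assoc, ← L.tr_comp,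
    T.right_unit, L.tr_id]
  simp

lemma act_tr_mu (hs : IsLeftAntipode T Q L s) (X : C) :
    act T L s X ≫ L.tr (T.μ.app X) = T.map (L.tr (T.μ.app X)) ≫ act T L s (T.obj X) := by
  rw [act, act, Category.assoc, ← hs.natural (T.μ.app X), ← Functor.map_comp_assoc, ← L.tr_comp,
    T.assoc, L.tr_comp, Functor.map_comp]
  simp

lemma lemE (hs : IsLeftAntipode T Q L s) (X : C) :
    Q.δ (L.d (T.obj X)) (T.obj X) ≫ (act T L s X ⊗ₘ T.μ.app X) ≫ L.ev (T.obj X)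
      = T.map (L.ev (T.obj X)) ≫ Q.ε := by
  have e1 : (act T L s X ⊗ₘ T.μ.app X) ≫ L.ev (T.obj X)
      = ((T.map (L.tr (T.μ.app X)) ≫ act T L s (T.obj X)) ⊗ₘ 𝟙 (T.obj (T.obj X)))
        ≫ L.ev (T.obj (T.obj X)) := by
    rw [show (act T L s X ⊗ₘ T.μ.app X)
        = (act T L s X ⊗ₘ 𝟙 (T.obj (T.obj X))) ≫ (𝟙 (L.d (T.obj X)) ⊗ₘ T.μ.app X) from by
      rw [tensorHom_comp_tensorHom]; simp]
    rw [Category.assoc, ← L.ev_tr (T.μ.app X)]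
    dsimp only [Functor.comp_obj, Functor.id_obj]
    rw [tensorHom_comp_tensorHom_assoc, Category.comp_id, act_tr_mu hs X]
  rw [e1]
  have e2 : ((T.map (L.tr (T.μ.app X)) ≫ act T L s (T.obj X)) ⊗ₘ 𝟙 (T.obj (T.obj X)))
      = (T.map (L.tr (T.μ.app X)) ⊗ₘ 𝟙 (T.obj (T.obj X)))
        ≫ (act T L s (T.obj X) ⊗ₘ 𝟙 (T.obj (T.obj X))) := by
    rw [tensorHom_comp_tensorHom]; simp
  rw [e2]
  have e3 : Q.δ (L.d (T.obj X)) (T.obj X)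
      ≫ (T.map (L.tr (T.μ.app X)) ⊗ₘ 𝟙 (T.obj (T.obj X)))
      = T.map (L.tr (T.μ.app X) ⊗ₘ 𝟙 (T.obj X))
        ≫ Q.δ (L.d (T.obj (T.obj X))) (T.obj X) := by
    simpa using (Q.δ_natural (L.tr (T.μ.app X)) (𝟙 (T.obj X))).symm
  slice_lhs 1 2 => rw [e3]
  simp only [act]
  slice_lhs 2 4 => rw [← hs.lant1 (T.obj X)]
  rw [← Functor.map_comp_assoc, tensorHom_comp_tensorHom, ← L.tr_comp, T.left_unit, L.tr_id]
  simp

lemma lemC (hs : IsLeftAntipode T Q L s) (X : C) :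
    Q.ε ≫ L.coev (T.obj X)
      = T.map (L.coev (T.obj X)) ≫ Q.δ (T.obj X) (L.d (T.obj X))
        ≫ (T.μ.app X ⊗ₘ act T L s X) := by
  have e1 : (T.μ.app X ⊗ₘ act T L s X)
      = (𝟙 (T.obj (T.obj X)) ⊗ₘ T.map (L.tr (T.μ.app X))) ≫ (T.μ.app X ⊗ₘ s (T.obj X)) := by
    rw [act, tensorHom_comp_tensorHom]; simp
  rw [e1]
  have e2 : Q.δ (T.obj X) (L.d (T.obj X)) ≫ (𝟙 (T.obj (T.obj X)) ⊗ₘ T.map (L.tr (T.μ.app X)))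
      = T.map (𝟙 (T.obj X) ⊗ₘ L.tr (T.μ.app X)) ≫ Q.δ (T.obj X) (L.d (T.obj (T.obj X))) := by
    simpa using (Q.δ_natural (𝟙 (T.obj X)) (L.tr (T.μ.app X))).symm
  slice_rhs 2 3 => rw [e2]
  have e3 : T.map (L.coev (T.obj X)) ≫ T.map (𝟙 (T.obj X) ⊗ₘ L.tr (T.μ.app X))
      = T.map (L.coev (T.obj (T.obj X))) ≫ T.map (T.μ.app X ⊗ₘ 𝟙 (L.d (T.obj (T.obj X)))) := by
    rw [← Functor.map_comp, ← Functor.map_comp, ← L.coev_tr (T.μ.app X)]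
    rfl
  slice_rhs 1 2 => rw [e3]
  have e4 : T.map (T.μ.app X ⊗ₘ 𝟙 (L.d (T.obj (T.obj X))))
      ≫ Q.δ (T.obj X) (L.d (T.obj (T.obj X)))
      = Q.δ (T.obj (T.obj X)) (L.d (T.obj (T.obj X))) ≫ (T.map (T.μ.app X) ⊗ₘ 𝟙 _) := by
    simpa using Q.δ_natural (T.μ.app X) (𝟙 (L.d (T.obj (T.obj X))))
  slice_rhs 2 3 => rw [e4]
  have e5 : (T.map (T.μ.app X) ⊗ₘ 𝟙 (T.obj (L.d (T.obj (T.obj X)))))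
      ≫ (T.μ.app X ⊗ₘ s (T.obj X))
      = (T.μ.app (T.obj X) ⊗ₘ s (T.obj X)) ≫ (T.μ.app X ⊗ₘ 𝟙 (L.d (T.obj X))) := by
    rw [tensorHom_comp_tensorHom, tensorHom_comp_tensorHom, Category.id_comp, Category.comp_id, T.assoc]
  slice_rhs 3 4 => rw [e5]
  have e6 := (hs.lant2 (T.obj X)).symm
  slice_rhs 1 3 => rw [e6]
  rw [Category.assoc, Category.assoc, tensorHom_comp_tensorHom, T.left_unit]
  simp

lemma lemC0 (hB : IsBimonad T Q) (hs : IsLeftAntipode T Q L s) (X : C) :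
    L.coev (T.obj X) ≫ (𝟙 (T.obj X) ⊗ₘ (T.η.app (L.d (T.obj X)) ≫ act T L s X))
      = L.coev (T.obj X) := by
  have h2 : L.coev (T.obj X) = L.coev (T.obj X)
      ≫ (T.η.app (T.obj X) ⊗ₘ T.η.app (L.d (T.obj X))) ≫ (T.μ.app X ⊗ₘ act T L s X) := by
    have h3 : T.η.app (𝟙_ C) ≫ Q.ε ≫ L.coev (T.obj X) = L.coev (T.obj X) := by
      rw [← Category.assoc, hB.eta_ε]; simp
    conv_lhs => rw [← h3, lemC hs X]
    rw [← Category.assoc (T.η.app (𝟙_ C)),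
      show T.η.app (𝟙_ C) ≫ T.map (L.coev (T.obj X))
        = L.coev (T.obj X) ≫ T.η.app (T.obj X ⊗ L.d (T.obj X)) from
          (T.η.naturality (L.coev (T.obj X))).symm,
      Category.assoc]
    congr 1
    rw [← Category.assoc, hB.eta_δ]
  have h4 : (T.η.app (T.obj X) ⊗ₘ T.η.app (L.d (T.obj X))) ≫ (T.μ.app X ⊗ₘ act T L s X)
      = (𝟙 (T.obj X) ⊗ₘ (T.η.app (L.d (T.obj X)) ≫ act T L s X)) := by
    rw [tensorHom_comp_tensorHom]; simp
  calc L.coev (T.obj X) ≫ (𝟙 (T.obj X) ⊗ₘ (T.η.app (L.d (T.obj X)) ≫ act T L s X))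
      = L.coev (T.obj X) ≫ (T.η.app (T.obj X) ⊗ₘ T.η.app (L.d (T.obj X)))
        ≫ (T.μ.app X ⊗ₘ act T L s X) := by rw [h4]
    _ = L.coev (T.obj X) := h2.symm

lemma unit_act (hB : IsBimonad T Q) (hs : IsLeftAntipode T Q L s) (X : C) :
    T.η.app (L.d (T.obj X)) ≫ act T L s X = 𝟙 (L.d (T.obj X)) := by
  refine (sandwich (idComonoidal) (L.ev (T.obj X)) (L.coev (T.obj X)) (L.tri1 (T.obj X))
    (𝟙 (T.obj X)) (𝟙 _) (T.η.app (L.d (T.obj X)) ≫ act T L s X) ?_ ?_).symm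
  · simp [idComonoidal]
  · simp only [idComonoidal, Functor.id_map, Category.id_comp]
    exact (lemC0 hB hs X).symm

lemma lemLb1 (hB : IsBimonad T Q) (hs : IsLeftAntipode T Q L s) (X : C) :
    (sqComonoidal T Q).δ (L.d (T.obj X)) (T.obj X)
      ≫ ((T.μ.app (L.d (T.obj X)) ≫ act T L s X) ⊗ₘ (T.map (T.μ.app X) ≫ T.μ.app X))
      ≫ L.ev (T.obj X)
      = (T.toFunctor ⋙ T.toFunctor).map (L.ev (T.obj X)) ≫ (sqComonoidal T Q).ε := by
  symm
  calc (T.toFunctor ⋙ T.toFunctor).map (L.ev (T.obj X)) ≫ (sqComonoidal T Q).ε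
      = T.map (T.map (L.ev (T.obj X))) ≫ T.map Q.ε ≫ Q.ε := rfl
    _ = T.map (T.map (L.ev (T.obj X))) ≫ T.μ.app (𝟙_ C) ≫ Q.ε := by rw [← hB.mu_ε]
    _ = (T.μ.app (L.d (T.obj X) ⊗ T.obj X) ≫ T.map (L.ev (T.obj X))) ≫ Q.ε := by
        rw [← Category.assoc]
        congr 1
        exact T.μ.naturality (L.ev (T.obj X))
    _ = T.μ.app (L.d (T.obj X) ⊗ T.obj X) ≫ Q.δ (L.d (T.obj X)) (T.obj X)
        ≫ (act T L s X ⊗ₘ T.μ.app X) ≫ L.ev (T.obj X) := by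
        rw [Category.assoc, ← lemE hs X]
    _ = (T.map (Q.δ (L.d (T.obj X)) (T.obj X))
          ≫ Q.δ (T.obj (L.d (T.obj X))) (T.obj (T.obj X))
          ≫ (T.μ.app (L.d (T.obj X)) ⊗ₘ T.μ.app (T.obj X)))
        ≫ (act T L s X ⊗ₘ T.μ.app X) ≫ L.ev (T.obj X) := by
        rw [← hB.mu_δ, Category.assoc]
    _ = T.map (Q.δ (L.d (T.obj X)) (T.obj X))
        ≫ Q.δ (T.obj (L.d (T.obj X))) (T.obj (T.obj X))
        ≫ ((T.μ.app (L.d (T.obj X)) ≫ act T L s X) ⊗ₘ (T.map (T.μ.app X) ≫ T.μ.app X))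
        ≫ L.ev (T.obj X) := by
        simp only [Category.assoc]
        congr 2
        rw [← Category.assoc, tensorHom_comp_tensorHom, T.assoc]
    _ = (sqComonoidal T Q).δ (L.d (T.obj X)) (T.obj X)
        ≫ ((T.μ.app (L.d (T.obj X)) ≫ act T L s X) ⊗ₘ (T.map (T.μ.app X) ≫ T.μ.app X))
        ≫ L.ev (T.obj X) := by
        simp only [sqComonoidal, Category.assoc]

lemma lemRb2 (hB : IsBimonad T Q) (hs : IsLeftAntipode T Q L s) (X : C) :
    (sqComonoidal T Q).ε ≫ L.coev (T.obj X)
      = (T.toFunctor ⋙ T.toFunctor).map (L.coev (T.obj X))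
        ≫ (sqComonoidal T Q).δ (T.obj X) (L.d (T.obj X))
        ≫ ((T.map (T.μ.app X) ≫ T.μ.app X) ⊗ₘ (T.map (act T L s X) ≫ act T L s X)) := by
  symm
  have e3' := T.toFunctor.congr_map (lemC hs X)
  simp only [Functor.map_comp] at e3'
  calc (T.toFunctor ⋙ T.toFunctor).map (L.coev (T.obj X))
        ≫ (sqComonoidal T Q).δ (T.obj X) (L.d (T.obj X))
        ≫ ((T.map (T.μ.app X) ≫ T.μ.app X) ⊗ₘ (T.map (act T L s X) ≫ act T L s X))
      = T.map (T.map (L.coev (T.obj X))) ≫ T.map (Q.δ (T.obj X) (L.d (T.obj X)))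
        ≫ Q.δ (T.obj (T.obj X)) (T.obj (L.d (T.obj X)))
        ≫ (T.map (T.μ.app X) ⊗ₘ T.map (act T L s X)) ≫ (T.μ.app X ⊗ₘ act T L s X) := by
        simp only [sqComonoidal, Functor.comp_map, Category.assoc, ← tensorHom_comp_tensorHom]
    _ = T.map (T.map (L.coev (T.obj X))) ≫ T.map (Q.δ (T.obj X) (L.d (T.obj X)))
        ≫ T.map (T.μ.app X ⊗ₘ act T L s X) ≫ Q.δ (T.obj X) (L.d (T.obj X))
        ≫ (T.μ.app X ⊗ₘ act T L s X) := by
        rw [reassoc_of% ((Q.δ_natural (T.μ.app X) (act T L s X)).symm)]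
    _ = T.map Q.ε ≫ T.map (L.coev (T.obj X)) ≫ Q.δ (T.obj X) (L.d (T.obj X))
        ≫ (T.μ.app X ⊗ₘ act T L s X) := by
        rw [reassoc_of% (e3'.symm)]
    _ = T.map Q.ε ≫ Q.ε ≫ L.coev (T.obj X) := by rw [← lemC hs X]
    _ = (sqComonoidal T Q).ε ≫ L.coev (T.obj X) := by simp only [sqComonoidal, Category.assoc]

lemma assoc_act (hB : IsBimonad T Q) (hs : IsLeftAntipode T Q L s) (X : C) :
    T.μ.app (L.d (T.obj X)) ≫ act T L s X = T.map (act T L s X) ≫ act T L s X :=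
  sandwich (sqComonoidal T Q) (L.ev (T.obj X)) (L.coev (T.obj X)) (L.tri1 (T.obj X))
    (T.map (T.μ.app X) ≫ T.μ.app X) _ _ (lemLb1 hB hs X) (lemRb2 hB hs X)

end Main


/-- If a bimonad `T` on a monoidal category admits a left antipode
`s^l`, then `s^l_X ∘ μ_{ˡT(X)} = s^l_X ∘ T(s^l_{T(X)}) ∘ T²(ˡμ_X)` and
`s^l_X ∘ η_{ˡT(X)} = ˡη_X` for all `X`. -/
theorem stmt6 (T : Monad C) (Q : Comonoidal T.toFunctor) (hB : IsBimonad T Q)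
    (L : LeftDualData C) (s : ∀ X : C, T.obj (L.d (T.obj X)) ⟶ L.d X)
    (hs : IsLeftAntipode T Q L s) :
    ∀ X : C,
      (T.μ.app (L.d (T.obj X)) ≫ s X
        = T.map (T.map (L.tr (T.μ.app X))) ≫ T.map (s (T.obj X)) ≫ s X) ∧
      (T.η.app (L.d (T.obj X)) ≫ s X = L.tr (T.η.app X)) := by
  intro X
  refine ⟨?_, ?_⟩
  · calc T.μ.app (L.d (T.obj X)) ≫ s X
        = T.μ.app (L.d (T.obj X)) ≫ act T L s X ≫ L.tr (T.η.app X) := by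
          rw [act_tr_eta hs X]
      _ = (T.map (act T L s X) ≫ act T L s X) ≫ L.tr (T.η.app X) := by
          rw [← Category.assoc, assoc_act hB hs X]
      _ = T.map (act T L s X) ≫ s X := by
          rw [Category.assoc, act_tr_eta hs X]
      _ = T.map (T.map (L.tr (T.μ.app X))) ≫ T.map (s (T.obj X)) ≫ s X := by
          simp only [act, Functor.map_comp, Category.assoc]
  · rw [← act_tr_eta hs X, ← Category.assoc, unit_act hB hs X]
    simp

end HopfMonadPaper
end

section
/- Let T be a bimonad on a left autonomous monoidal category C. Then T admits a left antipode s^l if and only if the Eilenberg–Moore category of T-modules (with the monoidal structure lifted from C) is left autonomous. When a left antipode exists it is unique, and the left dual of a T-module (M,r) is given by (ˡM, s^l_M ∘ T(ˡr)) with evaluation ev_M and coevaluation coev_M. -/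
open CategoryTheory MonoidalCategory

namespace HopfMonadPaper

variable {C : Type*} [Category C] [MonoidalCategory C]

set_option maxHeartbeats 1600000
set_option linter.unusedVariables false


def xfer {P' M P : C} (p : P' ⊗ M ⟶ 𝟙_ C) (q : 𝟙_ C ⟶ M ⊗ P) : P' ⟶ P :=
  (ρ_ P').inv ≫ (𝟙 P' ⊗ₘ q) ≫ (α_ P' M P).inv ≫ (p ⊗ₘ 𝟙 P) ≫ (λ_ P).hom

def zig {A B D : C} (q : 𝟙_ C ⟶ A ⊗ B) (e : B ⊗ D ⟶ 𝟙_ C) : D ⟶ A :=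
  (λ_ D).inv ≫ (q ⊗ₘ 𝟙 D) ≫ (α_ A B D).hom ≫ (𝟙 A ⊗ₘ e) ≫ (ρ_ A).hom

lemma comp_xfer {A P' M P : C} (j : A ⟶ P') (p : P' ⊗ M ⟶ 𝟙_ C) (q : 𝟙_ C ⟶ M ⊗ P) :
    j ≫ xfer p q = xfer ((j ⊗ₘ 𝟙 M) ≫ p) q := by
  calc j ≫ xfer p q
      = 𝟙 _ ⊗≫ (j ▷ 𝟙_ C ≫ P' ◁ q) ⊗≫ p ▷ P ⊗≫ 𝟙 _ := by
        simp only [xfer, MonoidalCategory.tensorHom_def]; monoidal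
    _ = 𝟙 _ ⊗≫ (A ◁ q ≫ j ▷ (M ⊗ P)) ⊗≫ p ▷ P ⊗≫ 𝟙 _ := by
        rw [← whisker_exchange]
    _ = xfer ((j ⊗ₘ 𝟙 M) ≫ p) q := by
        simp only [xfer, MonoidalCategory.tensorHom_def]; monoidal

lemma xfer_pair {P' M P M' : C} (p : P' ⊗ M ⟶ 𝟙_ C) (q : 𝟙_ C ⟶ M ⊗ P) (e : P ⊗ M' ⟶ 𝟙_ C) :
    (xfer p q ⊗ₘ 𝟙 M') ≫ e = (𝟙 P' ⊗ₘ zig q e) ≫ p := by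
  calc (xfer p q ⊗ₘ 𝟙 M') ≫ e
      = 𝟙 _ ⊗≫ P' ◁ q ▷ M' ⊗≫ (p ▷ (P ⊗ M') ≫ 𝟙_ C ◁ e) ⊗≫ 𝟙 _ := by
        simp only [xfer, MonoidalCategory.tensorHom_def]; monoidal
    _ = 𝟙 _ ⊗≫ P' ◁ q ▷ M' ⊗≫ ((P' ⊗ M) ◁ e ≫ p ▷ 𝟙_ C) ⊗≫ 𝟙 _ := by
        rw [whisker_exchange]
    _ = (𝟙 P' ⊗ₘ zig q e) ≫ p := by
        simp only [zig, MonoidalCategory.tensorHom_def]; monoidal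

lemma copair_xfer {M₀ P' M P : C} (q₀ : 𝟙_ C ⟶ M₀ ⊗ P') (p : P' ⊗ M ⟶ 𝟙_ C)
    (q : 𝟙_ C ⟶ M ⊗ P) :
    q₀ ≫ (𝟙 M₀ ⊗ₘ xfer p q) = q ≫ (zig q₀ p ⊗ₘ 𝟙 P) := by
  calc q₀ ≫ (𝟙 M₀ ⊗ₘ xfer p q)
      = 𝟙 _ ⊗≫ (q₀ ▷ 𝟙_ C ≫ (M₀ ⊗ P') ◁ q) ⊗≫ M₀ ◁ p ▷ P ⊗≫ 𝟙 _ := by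
        simp only [xfer, MonoidalCategory.tensorHom_def]; monoidal
    _ = 𝟙 _ ⊗≫ (𝟙_ C ◁ q ≫ q₀ ▷ (M ⊗ P)) ⊗≫ M₀ ◁ p ▷ P ⊗≫ 𝟙 _ := by
        rw [← whisker_exchange]
    _ = q ≫ (zig q₀ p ⊗ₘ 𝟙 P) := by
        simp only [zig, MonoidalCategory.tensorHom_def]; monoidal

lemma zig_whiskerLeft {A B D D' : C} (q : 𝟙_ C ⟶ A ⊗ B) (f : D' ⟶ D) (e : B ⊗ D ⟶ 𝟙_ C) :
    zig q ((𝟙 B ⊗ₘ f) ≫ e) = f ≫ zig q e := by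
  calc zig q ((𝟙 B ⊗ₘ f) ≫ e)
      = 𝟙 _ ⊗≫ (q ▷ D' ≫ (A ⊗ B) ◁ f) ⊗≫ A ◁ e ⊗≫ 𝟙 _ := by
        simp only [zig, MonoidalCategory.tensorHom_def]; monoidal
    _ = 𝟙 _ ⊗≫ (𝟙_ C ◁ f ≫ q ▷ D) ⊗≫ A ◁ e ⊗≫ 𝟙 _ := by
        rw [← whisker_exchange]
    _ = f ≫ zig q e := by
        simp only [zig, MonoidalCategory.tensorHom_def]; monoidal

section DualLemmas
variable (L : LeftDualData C)

lemma tr_eq_xfer {X Y : C} (f : X ⟶ Y) :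
    L.tr f = xfer ((𝟙 (L.d Y) ⊗ₘ f) ≫ L.ev Y) (L.coev X) := by
  simp only [LeftDualData.tr, xfer, MonoidalCategory.tensorHom_def]; monoidal

lemma xfer_ev_coev (X : C) : xfer (L.ev X) (L.coev X) = 𝟙 (L.d X) := L.tri1 X

lemma zig_coev_ev (X : C) : zig (L.coev X) (L.ev X) = 𝟙 X := L.tri2 X

lemma ev_ext {A X : C} {j j' : A ⟶ L.d X}
    (hyp : (j ⊗ₘ 𝟙 X) ≫ L.ev X = (j' ⊗ₘ 𝟙 X) ≫ L.ev X) : j = j' := by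
  have h1 : j = xfer ((j ⊗ₘ 𝟙 X) ≫ L.ev X) (L.coev X) := by
    rw [← comp_xfer, xfer_ev_coev, Category.comp_id]
  have h2 : j' = xfer ((j' ⊗ₘ 𝟙 X) ≫ L.ev X) (L.coev X) := by
    rw [← comp_xfer, xfer_ev_coev, Category.comp_id]
  rw [h1, h2, hyp]

lemma tr_ev {X Y : C} (f : X ⟶ Y) :
    (L.tr f ⊗ₘ 𝟙 X) ≫ L.ev X = (𝟙 (L.d Y) ⊗ₘ f) ≫ L.ev Y := by
  rw [tr_eq_xfer, xfer_pair, zig_coev_ev]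
  simp

lemma coev_tr {X Y : C} (f : X ⟶ Y) :
    L.coev X ≫ (f ⊗ₘ 𝟙 (L.d X)) = L.coev Y ≫ (𝟙 Y ⊗ₘ L.tr f) := by
  rw [tr_eq_xfer, copair_xfer, zig_whiskerLeft, zig_coev_ev, Category.comp_id]

lemma tr_id (X : C) : L.tr (𝟙 X) = 𝟙 (L.d X) := by
  rw [tr_eq_xfer]
  simpa using xfer_ev_coev L X

lemma tr_comp {X Y Z : C} (f : X ⟶ Y) (g : Y ⟶ Z) :
    L.tr (f ≫ g) = L.tr g ≫ L.tr f := by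
  apply ev_ext L
  rw [tr_ev]
  have : (L.tr g ≫ L.tr f ⊗ₘ 𝟙 X) = (L.tr g ⊗ₘ 𝟙 X) ≫ (L.tr f ⊗ₘ 𝟙 X) := by
    rw [tensorHom_comp_tensorHom, Category.comp_id]
  rw [this, Category.assoc, tr_ev]
  have : (L.tr g ⊗ₘ 𝟙 X) ≫ (𝟙 (L.d Y) ⊗ₘ f) = (𝟙 (L.d Z) ⊗ₘ f) ≫ (L.tr g ⊗ₘ 𝟙 Y) := by
    rw [tensorHom_comp_tensorHom, tensorHom_comp_tensorHom]; simp
  rw [← Category.assoc, this, Category.assoc, tr_ev, ← Category.assoc, tensorHom_comp_tensorHom]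
  simp

end DualLemmas
section Master
variable {S : C ⥤ C} (QS : Comonoidal S)

/-- Way A: evaluating the sandwich using a counit-form first factor. -/
lemma wayA {P M Z Zc : C} (e : P ⊗ M ⟶ 𝟙_ C) (q : 𝟙_ C ⟶ M ⊗ Z) (h : S.obj Z ⟶ Zc) :
    S.map ((ρ_ P).inv ≫ (𝟙 P ⊗ₘ q) ≫ (α_ P M Z).inv) ≫ QS.δ (P ⊗ M) Z
      ≫ ((S.map e ≫ QS.ε) ⊗ₘ h) ≫ (λ_ Zc).hom
    = S.map (xfer e q) ≫ h := by
  have split : ((S.map e ≫ QS.ε) ⊗ₘ h)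
      = (S.map e ⊗ₘ S.map (𝟙 Z)) ≫ (QS.ε ⊗ₘ 𝟙 (S.obj Z)) ≫ (𝟙 (𝟙_ C) ⊗ₘ h) := by
    rw [tensorHom_comp_tensorHom, tensorHom_comp_tensorHom]; simp
  rw [split]
  slice_lhs 2 3 => rw [← QS.δ_natural e (𝟙 Z)]
  have lunit : (𝟙 (𝟙_ C) ⊗ₘ h) ≫ (λ_ Zc).hom = (λ_ (S.obj Z)).hom ≫ h := by
    simp
  slice_lhs 5 6 => rw [lunit]
  slice_lhs 3 5 => rw [QS.counit_left Z]
  simp only [← S.map_comp, ← Category.assoc, ← S.map_comp]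
  simp only [xfer, Category.assoc]

set_option maxHeartbeats 1000000 in
/-- Way B: evaluating the sandwich using comonoidal coassociativity. -/
lemma wayB {P P₂ M Z Zc : C} (r : S.obj M ⟶ M)
    (e₂ : P₂ ⊗ M ⟶ 𝟙_ C) (q : 𝟙_ C ⟶ M ⊗ Z) (q₂ : 𝟙_ C ⟶ M ⊗ Zc)
    (g : S.obj P ⟶ P₂) (h : S.obj Z ⟶ Zc)
    (Hcoev : S.map q ≫ QS.δ M Z ≫ (r ⊗ₘ h) = QS.ε ≫ q₂) :
    S.map ((ρ_ P).inv ≫ (𝟙 P ⊗ₘ q) ≫ (α_ P M Z).inv) ≫ QS.δ (P ⊗ M) Z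
      ≫ ((QS.δ P M ≫ (g ⊗ₘ r) ≫ e₂) ⊗ₘ h) ≫ (λ_ Zc).hom
    = g ≫ xfer e₂ q₂ := by
  have split : ((QS.δ P M ≫ (g ⊗ₘ r) ≫ e₂) ⊗ₘ h)
      = (QS.δ P M ⊗ₘ 𝟙 (S.obj Z)) ≫ ((g ⊗ₘ r) ⊗ₘ h) ≫ (e₂ ⊗ₘ 𝟙 Zc) := by
    rw [tensorHom_comp_tensorHom, tensorHom_comp_tensorHom]; simp
  have coassoc' : S.map (α_ P M Z).inv ≫ QS.δ (P ⊗ M) Z ≫ (QS.δ P M ⊗ₘ 𝟙 (S.obj Z))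
      = QS.δ P (M ⊗ Z) ≫ (𝟙 (S.obj P) ⊗ₘ QS.δ M Z)
        ≫ (α_ (S.obj P) (S.obj M) (S.obj Z)).inv := by
    have h1 := QS.coassoc P M Z
    calc S.map (α_ P M Z).inv ≫ QS.δ (P ⊗ M) Z ≫ (QS.δ P M ⊗ₘ 𝟙 (S.obj Z))
        = S.map (α_ P M Z).inv ≫ (QS.δ (P ⊗ M) Z ≫ (QS.δ P M ⊗ₘ 𝟙 (S.obj Z))
            ≫ (α_ (S.obj P) (S.obj M) (S.obj Z)).hom)
            ≫ (α_ (S.obj P) (S.obj M) (S.obj Z)).inv := by simp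
      _ = S.map (α_ P M Z).inv ≫ (S.map (α_ P M Z).hom ≫ QS.δ P (M ⊗ Z)
            ≫ (𝟙 (S.obj P) ⊗ₘ QS.δ M Z)) ≫ (α_ (S.obj P) (S.obj M) (S.obj Z)).inv := by
          rw [h1]
      _ = _ := by
          rw [← Category.assoc, ← Category.assoc, ← S.map_comp]
          simp
  have anat : (α_ (S.obj P) (S.obj M) (S.obj Z)).inv ≫ ((g ⊗ₘ r) ⊗ₘ h)
      = (g ⊗ₘ (r ⊗ₘ h)) ≫ (α_ P₂ M Zc).inv := by
    rw [associator_inv_naturality]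
  have merge : (𝟙 (S.obj P) ⊗ₘ QS.δ M Z) ≫ (g ⊗ₘ (r ⊗ₘ h))
      = (g ⊗ₘ (QS.δ M Z ≫ (r ⊗ₘ h))) := by
    rw [tensorHom_comp_tensorHom]; simp
  have dn := QS.δ_natural (𝟙 P) q
  have merge2 : (S.map (𝟙 P) ⊗ₘ S.map q) ≫ (g ⊗ₘ (QS.δ M Z ≫ (r ⊗ₘ h)))
      = (g ⊗ₘ (S.map q ≫ QS.δ M Z ≫ (r ⊗ₘ h))) := by
    rw [tensorHom_comp_tensorHom]; simp
  have split2 : (g ⊗ₘ QS.ε ≫ q₂)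
      = (𝟙 (S.obj P) ⊗ₘ QS.ε) ≫ (g ⊗ₘ 𝟙 (𝟙_ C)) ≫ (𝟙 P₂ ⊗ₘ q₂) := by
    rw [tensorHom_comp_tensorHom, tensorHom_comp_tensorHom]; simp
  have cr : QS.δ P (𝟙_ C) ≫ (𝟙 (S.obj P) ⊗ₘ QS.ε)
      = S.map (ρ_ P).hom ≫ (ρ_ (S.obj P)).inv := by
    have h2 := QS.counit_right P
    calc QS.δ P (𝟙_ C) ≫ (𝟙 (S.obj P) ⊗ₘ QS.ε)
        = (QS.δ P (𝟙_ C) ≫ (𝟙 (S.obj P) ⊗ₘ QS.ε) ≫ (ρ_ (S.obj P)).hom)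
            ≫ (ρ_ (S.obj P)).inv := by simp
      _ = _ := by rw [h2]
  calc S.map ((ρ_ P).inv ≫ (𝟙 P ⊗ₘ q) ≫ (α_ P M Z).inv) ≫ QS.δ (P ⊗ M) Z
        ≫ ((QS.δ P M ≫ (g ⊗ₘ r) ≫ e₂) ⊗ₘ h) ≫ (λ_ Zc).hom
      = S.map (ρ_ P).inv ≫ S.map (𝟙 P ⊗ₘ q) ≫ (S.map (α_ P M Z).inv ≫ QS.δ (P ⊗ M) Z
          ≫ (QS.δ P M ⊗ₘ 𝟙 (S.obj Z))) ≫ ((g ⊗ₘ r) ⊗ₘ h) ≫ (e₂ ⊗ₘ 𝟙 Zc) ≫ (λ_ Zc).hom := by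
        rw [split]; simp only [Functor.map_comp, Category.assoc]
    _ = S.map (ρ_ P).inv ≫ S.map (𝟙 P ⊗ₘ q) ≫ QS.δ P (M ⊗ Z)
          ≫ (𝟙 (S.obj P) ⊗ₘ QS.δ M Z) ≫ ((α_ (S.obj P) (S.obj M) (S.obj Z)).inv
          ≫ ((g ⊗ₘ r) ⊗ₘ h)) ≫ (e₂ ⊗ₘ 𝟙 Zc) ≫ (λ_ Zc).hom := by
        rw [coassoc']; simp only [Category.assoc]
    _ = S.map (ρ_ P).inv ≫ (S.map (𝟙 P ⊗ₘ q) ≫ QS.δ P (M ⊗ Z))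
          ≫ ((𝟙 (S.obj P) ⊗ₘ QS.δ M Z) ≫ (g ⊗ₘ (r ⊗ₘ h))) ≫ (α_ P₂ M Zc).inv
          ≫ (e₂ ⊗ₘ 𝟙 Zc) ≫ (λ_ Zc).hom := by
        rw [anat]; simp only [Category.assoc]
    _ = S.map (ρ_ P).inv ≫ QS.δ P (𝟙_ C) ≫ ((S.map (𝟙 P) ⊗ₘ S.map q)
          ≫ (g ⊗ₘ (QS.δ M Z ≫ (r ⊗ₘ h)))) ≫ (α_ P₂ M Zc).inv
          ≫ (e₂ ⊗ₘ 𝟙 Zc) ≫ (λ_ Zc).hom := by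
        rw [merge, dn]; simp only [Category.assoc]
    _ = S.map (ρ_ P).inv ≫ QS.δ P (𝟙_ C) ≫ (g ⊗ₘ (QS.ε ≫ q₂)) ≫ (α_ P₂ M Zc).inv
          ≫ (e₂ ⊗ₘ 𝟙 Zc) ≫ (λ_ Zc).hom := by
        rw [merge2, Hcoev]
    _ = S.map (ρ_ P).inv ≫ (QS.δ P (𝟙_ C) ≫ (𝟙 (S.obj P) ⊗ₘ QS.ε)) ≫ (g ⊗ₘ 𝟙 (𝟙_ C))
          ≫ (𝟙 P₂ ⊗ₘ q₂) ≫ (α_ P₂ M Zc).inv ≫ (e₂ ⊗ₘ 𝟙 Zc) ≫ (λ_ Zc).hom := by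
        rw [split2]; simp only [Category.assoc]
    _ = S.map (ρ_ P).inv ≫ S.map (ρ_ P).hom ≫ (ρ_ (S.obj P)).inv ≫ (g ⊗ₘ 𝟙 (𝟙_ C))
          ≫ (𝟙 P₂ ⊗ₘ q₂) ≫ (α_ P₂ M Zc).inv ≫ (e₂ ⊗ₘ 𝟙 Zc) ≫ (λ_ Zc).hom := by
        rw [cr]; simp only [Category.assoc]
    _ = g ≫ (ρ_ P₂).inv ≫ (𝟙 P₂ ⊗ₘ q₂) ≫ (α_ P₂ M Zc).inv ≫ (e₂ ⊗ₘ 𝟙 Zc) ≫ (λ_ Zc).hom := by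
        rw [← S.map_comp_assoc]
        simp
    _ = g ≫ xfer e₂ q₂ := rfl

lemma master {M P P₂ Z Zc : C}
    (r : S.obj M ⟶ M) (e : P ⊗ M ⟶ 𝟙_ C) (q : 𝟙_ C ⟶ M ⊗ Z)
    (e₂ : P₂ ⊗ M ⟶ 𝟙_ C) (q₂ : 𝟙_ C ⟶ M ⊗ Zc)
    (g : S.obj P ⟶ P₂) (h : S.obj Z ⟶ Zc)
    (Hev : QS.δ P M ≫ (g ⊗ₘ r) ≫ e₂ = S.map e ≫ QS.ε)
    (Hcoev : S.map q ≫ QS.δ M Z ≫ (r ⊗ₘ h) = QS.ε ≫ q₂) :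
    S.map (xfer e q) ≫ h = g ≫ xfer e₂ q₂ := by
  rw [← wayA QS e q h, ← Hev, wayB QS r e₂ q q₂ g h Hcoev]

end Master
section CompComonoidal
variable {F G : C ⥤ C}

/-- Composite of two comonoidal endofunctors. -/
def Comonoidal.comp (Q1 : Comonoidal F) (Q2 : Comonoidal G) : Comonoidal (F ⋙ G) where
  δ X Y := G.map (Q1.δ X Y) ≫ Q2.δ (F.obj X) (F.obj Y)
  ε := G.map Q1.ε ≫ Q2.ε
  δ_natural {X X' Y Y'} f g := by
    dsimp only [Functor.comp_map, Functor.comp_obj]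
    calc G.map (F.map (f ⊗ₘ g)) ≫ G.map (Q1.δ X' Y') ≫ Q2.δ (F.obj X') (F.obj Y')
        = G.map (F.map (f ⊗ₘ g) ≫ Q1.δ X' Y') ≫ Q2.δ (F.obj X') (F.obj Y') := by
          rw [G.map_comp]; simp only [Category.assoc]
      _ = G.map (Q1.δ X Y) ≫ G.map (F.map f ⊗ₘ F.map g) ≫ Q2.δ (F.obj X') (F.obj Y') := by
          rw [Q1.δ_natural, G.map_comp]; simp only [Category.assoc]
      _ = _ := by rw [Q2.δ_natural]; simp only [Category.assoc]
  coassoc X Y Z := by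
    dsimp only [Functor.comp_map, Functor.comp_obj]
    have h1 : (G.map (Q1.δ X Y) ≫ Q2.δ (F.obj X) (F.obj Y)) ⊗ₘ 𝟙 (G.obj (F.obj Z))
        = (G.map (Q1.δ X Y) ⊗ₘ G.map (𝟙 (F.obj Z)))
          ≫ (Q2.δ (F.obj X) (F.obj Y) ⊗ₘ 𝟙 (G.obj (F.obj Z))) := by
      rw [tensorHom_comp_tensorHom]; simp
    have h2 : 𝟙 (G.obj (F.obj X)) ⊗ₘ (G.map (Q1.δ Y Z) ≫ Q2.δ (F.obj Y) (F.obj Z))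
        = (G.map (𝟙 (F.obj X)) ⊗ₘ G.map (Q1.δ Y Z))
          ≫ (𝟙 (G.obj (F.obj X)) ⊗ₘ Q2.δ (F.obj Y) (F.obj Z)) := by
      rw [tensorHom_comp_tensorHom]; simp
    calc (G.map (Q1.δ (X ⊗ Y) Z) ≫ Q2.δ (F.obj (X ⊗ Y)) (F.obj Z))
          ≫ ((G.map (Q1.δ X Y) ≫ Q2.δ (F.obj X) (F.obj Y)) ⊗ₘ 𝟙 (G.obj (F.obj Z)))
          ≫ (α_ _ _ _).hom
        = G.map (Q1.δ (X ⊗ Y) Z) ≫ (Q2.δ (F.obj (X ⊗ Y)) (F.obj Z)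
            ≫ (G.map (Q1.δ X Y) ⊗ₘ G.map (𝟙 (F.obj Z))))
            ≫ (Q2.δ (F.obj X) (F.obj Y) ⊗ₘ 𝟙 (G.obj (F.obj Z))) ≫ (α_ _ _ _).hom := by
          rw [h1]; simp only [Category.assoc]
      _ = G.map (Q1.δ (X ⊗ Y) Z) ≫ G.map (Q1.δ X Y ⊗ₘ 𝟙 (F.obj Z))
            ≫ Q2.δ (F.obj X ⊗ F.obj Y) (F.obj Z)
            ≫ (Q2.δ (F.obj X) (F.obj Y) ⊗ₘ 𝟙 (G.obj (F.obj Z))) ≫ (α_ _ _ _).hom := by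
          rw [← Q2.δ_natural]; simp only [Category.assoc]
      _ = G.map (Q1.δ (X ⊗ Y) Z) ≫ G.map (Q1.δ X Y ⊗ₘ 𝟙 (F.obj Z))
            ≫ G.map (α_ (F.obj X) (F.obj Y) (F.obj Z)).hom
            ≫ Q2.δ (F.obj X) (F.obj Y ⊗ F.obj Z)
            ≫ (𝟙 (G.obj (F.obj X)) ⊗ₘ Q2.δ (F.obj Y) (F.obj Z)) := by
          rw [← Q2.coassoc]
      _ = G.map (F.map (α_ X Y Z).hom) ≫ G.map (Q1.δ X (Y ⊗ Z))
            ≫ G.map (𝟙 (F.obj X) ⊗ₘ Q1.δ Y Z)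
            ≫ Q2.δ (F.obj X) (F.obj Y ⊗ F.obj Z)
            ≫ (𝟙 (G.obj (F.obj X)) ⊗ₘ Q2.δ (F.obj Y) (F.obj Z)) := by
          simp only [← G.map_comp_assoc]
          rw [Q1.coassoc]
      _ = G.map (F.map (α_ X Y Z).hom) ≫ G.map (Q1.δ X (Y ⊗ Z))
            ≫ Q2.δ (F.obj X) (F.obj (Y ⊗ Z))
            ≫ (G.map (𝟙 (F.obj X)) ⊗ₘ G.map (Q1.δ Y Z))
            ≫ (𝟙 (G.obj (F.obj X)) ⊗ₘ Q2.δ (F.obj Y) (F.obj Z)) := by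
          rw [reassoc_of% (Q2.δ_natural (𝟙 (F.obj X)) (Q1.δ Y Z))]
      _ = _ := by rw [← h2]; simp only [Category.assoc]
  counit_left X := by
    dsimp only [Functor.comp_map, Functor.comp_obj]
    have h1 : (G.map Q1.ε ≫ Q2.ε) ⊗ₘ 𝟙 (G.obj (F.obj X))
        = (G.map Q1.ε ⊗ₘ G.map (𝟙 (F.obj X))) ≫ (Q2.ε ⊗ₘ 𝟙 (G.obj (F.obj X))) := by
      rw [tensorHom_comp_tensorHom]; simp
    calc (G.map (Q1.δ (𝟙_ C) X) ≫ Q2.δ (F.obj (𝟙_ C)) (F.obj X))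
          ≫ ((G.map Q1.ε ≫ Q2.ε) ⊗ₘ 𝟙 (G.obj (F.obj X))) ≫ (λ_ (G.obj (F.obj X))).hom
        = G.map (Q1.δ (𝟙_ C) X) ≫ (Q2.δ (F.obj (𝟙_ C)) (F.obj X)
            ≫ (G.map Q1.ε ⊗ₘ G.map (𝟙 (F.obj X))))
            ≫ (Q2.ε ⊗ₘ 𝟙 (G.obj (F.obj X))) ≫ (λ_ (G.obj (F.obj X))).hom := by
          rw [h1]; simp only [Category.assoc]
      _ = G.map (Q1.δ (𝟙_ C) X) ≫ G.map (Q1.ε ⊗ₘ 𝟙 (F.obj X)) ≫ Q2.δ (𝟙_ C) (F.obj X)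
            ≫ (Q2.ε ⊗ₘ 𝟙 (G.obj (F.obj X))) ≫ (λ_ (G.obj (F.obj X))).hom := by
          rw [← Q2.δ_natural]; simp only [Category.assoc]
      _ = G.map (Q1.δ (𝟙_ C) X) ≫ G.map (Q1.ε ⊗ₘ 𝟙 (F.obj X)) ≫ G.map (λ_ (F.obj X)).hom := by
          rw [Q2.counit_left]
      _ = _ := by
          simp only [← G.map_comp]
          congr 1
          exact Q1.counit_left X
  counit_right X := by
    dsimp only [Functor.comp_map, Functor.comp_obj]
    have h1 : 𝟙 (G.obj (F.obj X)) ⊗ₘ (G.map Q1.ε ≫ Q2.ε)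
        = (G.map (𝟙 (F.obj X)) ⊗ₘ G.map Q1.ε) ≫ (𝟙 (G.obj (F.obj X)) ⊗ₘ Q2.ε) := by
      rw [tensorHom_comp_tensorHom]; simp
    calc (G.map (Q1.δ X (𝟙_ C)) ≫ Q2.δ (F.obj X) (F.obj (𝟙_ C)))
          ≫ (𝟙 (G.obj (F.obj X)) ⊗ₘ (G.map Q1.ε ≫ Q2.ε)) ≫ (ρ_ (G.obj (F.obj X))).hom
        = G.map (Q1.δ X (𝟙_ C)) ≫ (Q2.δ (F.obj X) (F.obj (𝟙_ C))
            ≫ (G.map (𝟙 (F.obj X)) ⊗ₘ G.map Q1.ε))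
            ≫ (𝟙 (G.obj (F.obj X)) ⊗ₘ Q2.ε) ≫ (ρ_ (G.obj (F.obj X))).hom := by
          rw [h1]; simp only [Category.assoc]
      _ = G.map (Q1.δ X (𝟙_ C)) ≫ G.map (𝟙 (F.obj X) ⊗ₘ Q1.ε) ≫ Q2.δ (F.obj X) (𝟙_ C)
            ≫ (𝟙 (G.obj (F.obj X)) ⊗ₘ Q2.ε) ≫ (ρ_ (G.obj (F.obj X))).hom := by
          rw [← Q2.δ_natural]; simp only [Category.assoc]
      _ = G.map (Q1.δ X (𝟙_ C)) ≫ G.map (𝟙 (F.obj X) ⊗ₘ Q1.ε) ≫ G.map (ρ_ (F.obj X)).hom := by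
          rw [Q2.counit_right]
      _ = _ := by
          simp only [← G.map_comp]
          congr 1
          exact Q1.counit_right X
end CompComonoidal
section Forward
variable {T : Monad C} {Q : Comonoidal T.toFunctor} {L : LeftDualData C}
  {s : ∀ X : C, T.obj (L.d (T.obj X)) ⟶ L.d X}

lemma evlin_antipode (hB : IsBimonad T Q) (hs : IsLeftAntipode T Q L s) (M : T.Algebra) :
    Q.δ (L.d M.A) M.A ≫ ((T.map (L.tr M.a) ≫ s M.A) ⊗ₘ M.a) ≫ L.ev M.A
      = T.map (L.ev M.A) ≫ Q.ε := by
  have htr : L.tr M.a ≫ L.tr (T.map M.a) = L.tr M.a ≫ L.tr (T.μ.app M.A) := by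
    rw [← tr_comp, ← tr_comp, ← M.assoc]
  have key : ((T.map (L.tr M.a) ≫ s M.A) ⊗ₘ M.a) ≫ L.ev M.A
      = ((T.map (L.tr M.a ≫ L.tr (T.μ.app M.A)) ≫ s (T.obj M.A)) ⊗ₘ 𝟙 (T.obj M.A))
        ≫ L.ev (T.obj M.A) := by
    calc ((T.map (L.tr M.a) ≫ s M.A) ⊗ₘ M.a) ≫ L.ev M.A
        = ((T.map (L.tr M.a) ≫ s M.A) ⊗ₘ 𝟙 (T.obj M.A))
            ≫ ((𝟙 (L.d M.A) ⊗ₘ M.a) ≫ L.ev M.A) := by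
          rw [← Category.assoc, tensorHom_comp_tensorHom]; simp
      _ = ((T.map (L.tr M.a) ≫ s M.A) ⊗ₘ 𝟙 (T.obj M.A))
            ≫ (L.tr M.a ⊗ₘ 𝟙 (T.obj M.A)) ≫ L.ev (T.obj M.A) := by
          rw [tr_ev]
      _ = ((T.map (L.tr M.a) ≫ (s M.A ≫ L.tr M.a)) ⊗ₘ 𝟙 (T.obj M.A)) ≫ L.ev (T.obj M.A) := by
          rw [← Category.assoc, tensorHom_comp_tensorHom]; simp
      _ = ((T.map (L.tr M.a) ≫ T.map (L.tr (T.map M.a)) ≫ s (T.obj M.A))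
            ⊗ₘ 𝟙 (T.obj M.A)) ≫ L.ev (T.obj M.A) := by
          rw [← hs.natural]
      _ = _ := by rw [← Functor.map_comp_assoc, htr, Functor.map_comp_assoc]
  have split : ((T.map (L.tr M.a ≫ L.tr (T.μ.app M.A)) ≫ s (T.obj M.A)) ⊗ₘ 𝟙 (T.obj M.A))
      = (T.map (L.tr M.a) ⊗ₘ T.map (𝟙 M.A))
        ≫ ((T.map (L.tr (T.μ.app M.A)) ≫ s (T.obj M.A)) ⊗ₘ 𝟙 (T.obj M.A)) := by
    rw [tensorHom_comp_tensorHom, Functor.map_comp]; simp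
  have collapse : (L.tr M.a ⊗ₘ 𝟙 M.A) ≫ (L.tr (T.η.app M.A) ⊗ₘ 𝟙 M.A)
      = (𝟙 (L.d M.A) ⊗ₘ 𝟙 M.A) := by
    rw [tensorHom_comp_tensorHom, ← tr_comp, M.unit, tr_id L M.A]; simp
  calc Q.δ (L.d M.A) M.A ≫ ((T.map (L.tr M.a) ≫ s M.A) ⊗ₘ M.a) ≫ L.ev M.A
      = Q.δ (L.d M.A) M.A ≫ (T.map (L.tr M.a) ⊗ₘ T.map (𝟙 M.A))
          ≫ ((T.map (L.tr (T.μ.app M.A)) ≫ s (T.obj M.A)) ⊗ₘ 𝟙 (T.obj M.A))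
          ≫ L.ev (T.obj M.A) := by
        rw [key, split]; simp only [Category.assoc]
    _ = T.map (L.tr M.a ⊗ₘ 𝟙 M.A) ≫ Q.δ (L.d (T.obj M.A)) M.A
          ≫ ((T.map (L.tr (T.μ.app M.A)) ≫ s (T.obj M.A)) ⊗ₘ 𝟙 (T.obj M.A))
          ≫ L.ev (T.obj M.A) := by
        rw [← reassoc_of% (Q.δ_natural (L.tr M.a) (𝟙 M.A))]
    _ = T.map (L.tr M.a ⊗ₘ 𝟙 M.A) ≫ T.map (L.tr (T.η.app M.A) ⊗ₘ 𝟙 M.A)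
          ≫ T.map (L.ev M.A) ≫ Q.ε := by
        rw [← hs.lant1 M.A]
    _ = T.map (L.ev M.A) ≫ Q.ε := by
        rw [← Functor.map_comp_assoc, collapse]
        simp [← Functor.map_comp_assoc]

lemma coevlin_antipode (hB : IsBimonad T Q) (hs : IsLeftAntipode T Q L s) (M : T.Algebra) :
    Q.ε ≫ L.coev M.A
      = T.map (L.coev M.A) ≫ Q.δ M.A (L.d M.A)
          ≫ (M.a ⊗ₘ (T.map (L.tr M.a) ≫ s M.A)) := by
  have k1 : (M.a ⊗ₘ (T.map (L.tr M.a) ≫ s M.A))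
      = (T.map (𝟙 M.A) ⊗ₘ T.map (L.tr M.a)) ≫ (M.a ⊗ₘ s M.A) := by
    rw [tensorHom_comp_tensorHom]; simp
  have k3 : L.coev M.A ≫ (𝟙 M.A ⊗ₘ L.tr M.a)
      = L.coev (T.obj M.A) ≫ (M.a ⊗ₘ 𝟙 (L.d (T.obj M.A))) := (coev_tr L M.a).symm
  have k5 : (T.map M.a ⊗ₘ T.map (𝟙 (L.d (T.obj M.A)))) ≫ (M.a ⊗ₘ s M.A)
      = (T.μ.app M.A ⊗ₘ s M.A) ≫ (M.a ⊗ₘ 𝟙 (L.d M.A)) := by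
    rw [tensorHom_comp_tensorHom, tensorHom_comp_tensorHom, ← M.assoc]; simp
  calc Q.ε ≫ L.coev M.A
      = Q.ε ≫ L.coev M.A ≫ ((T.η.app M.A ≫ M.a) ⊗ₘ 𝟙 (L.d M.A)) := by
        rw [M.unit]; simp
    _ = (Q.ε ≫ L.coev M.A ≫ (T.η.app M.A ⊗ₘ 𝟙 (L.d M.A))) ≫ (M.a ⊗ₘ 𝟙 (L.d M.A)) := by
        rw [show ((T.η.app M.A ≫ M.a) ⊗ₘ 𝟙 (L.d M.A))
          = (T.η.app M.A ⊗ₘ 𝟙 (L.d M.A)) ≫ (M.a ⊗ₘ 𝟙 (L.d M.A)) by rw [tensorHom_comp_tensorHom]; simp]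
        simp only [Category.assoc]
    _ = (T.map (L.coev (T.obj M.A)) ≫ Q.δ (T.obj M.A) (L.d (T.obj M.A))
          ≫ (T.μ.app M.A ⊗ₘ s M.A)) ≫ (M.a ⊗ₘ 𝟙 (L.d M.A)) := by
        rw [hs.lant2 M.A]
    _ = T.map (L.coev (T.obj M.A)) ≫ Q.δ (T.obj M.A) (L.d (T.obj M.A))
          ≫ (T.map M.a ⊗ₘ T.map (𝟙 (L.d (T.obj M.A)))) ≫ (M.a ⊗ₘ s M.A) := by
        simp only [Category.assoc]; rw [← k5]
    _ = T.map (L.coev (T.obj M.A)) ≫ T.map (M.a ⊗ₘ 𝟙 (L.d (T.obj M.A)))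
          ≫ Q.δ M.A (L.d (T.obj M.A)) ≫ (M.a ⊗ₘ s M.A) := by
        rw [← reassoc_of% (Q.δ_natural M.a (𝟙 (L.d (T.obj M.A))))]
    _ = T.map (L.coev M.A) ≫ T.map (𝟙 M.A ⊗ₘ L.tr M.a)
          ≫ Q.δ M.A (L.d (T.obj M.A)) ≫ (M.a ⊗ₘ s M.A) := by
        rw [← Functor.map_comp_assoc, ← k3, Functor.map_comp_assoc]
    _ = T.map (L.coev M.A) ≫ Q.δ M.A (L.d M.A)
          ≫ (T.map (𝟙 M.A) ⊗ₘ T.map (L.tr M.a)) ≫ (M.a ⊗ₘ s M.A) := by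
        rw [reassoc_of% (Q.δ_natural (𝟙 M.A) (L.tr M.a))]
    _ = _ := by rw [k1]

lemma unit_antipode (hB : IsBimonad T Q) (hs : IsLeftAntipode T Q L s) (M : T.Algebra) :
    T.η.app (L.d M.A) ≫ T.map (L.tr M.a) ≫ s M.A = 𝟙 (L.d M.A) := by
  apply ev_ext L (X := M.A)
  have h1 := evlin_antipode hB hs M
  have h2 : T.η.app (L.d M.A ⊗ M.A) ≫ Q.δ (L.d M.A) M.A ≫ ((T.map (L.tr M.a) ≫ s M.A) ⊗ₘ M.a)
        ≫ L.ev M.A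
      = T.η.app (L.d M.A ⊗ M.A) ≫ T.map (L.ev M.A) ≫ Q.ε := by rw [h1]
  rw [reassoc_of% (hB.eta_δ (L.d M.A) M.A)] at h2
  have h3 : T.η.app (L.d M.A ⊗ M.A) ≫ T.map (L.ev M.A) = L.ev M.A ≫ T.η.app (𝟙_ C) := by
    simpa using (T.η.naturality (L.ev M.A)).symm
  rw [reassoc_of% h3, hB.eta_ε, Category.comp_id] at h2
  have h4 : (T.η.app (L.d M.A) ⊗ₘ T.η.app M.A)
        ≫ ((T.map (L.tr M.a) ≫ s M.A) ⊗ₘ M.a)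
      = ((T.η.app (L.d M.A) ≫ T.map (L.tr M.a) ≫ s M.A) ⊗ₘ 𝟙 M.A) := by
    rw [tensorHom_comp_tensorHom, M.unit]
  rw [reassoc_of% h4] at h2
  rw [h2]; simp

lemma assoc_antipode (hB : IsBimonad T Q) (hs : IsLeftAntipode T Q L s) (M : T.Algebra) :
    T.μ.app (L.d M.A) ≫ T.map (L.tr M.a) ≫ s M.A
      = T.map (T.map (L.tr M.a) ≫ s M.A) ≫ T.map (L.tr M.a) ≫ s M.A := by
  set a := T.map (L.tr M.a) ≫ s M.A with ha
  set S : C ⥤ C := T.toFunctor ⋙ T.toFunctor with hS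
  have hev : T.map (Q.δ (L.d M.A) M.A) ≫ Q.δ (T.obj (L.d M.A)) (T.obj M.A)
        ≫ ((T.μ.app (L.d M.A) ≫ a) ⊗ₘ (T.map M.a ≫ M.a)) ≫ L.ev M.A
      = T.map (T.map (L.ev M.A)) ≫ T.map Q.ε ≫ Q.ε := by
    have e1 : ((T.μ.app (L.d M.A) ≫ a) ⊗ₘ (T.map M.a ≫ M.a))
        = (T.μ.app (L.d M.A) ⊗ₘ T.μ.app M.A) ≫ (a ⊗ₘ M.a) := by
      rw [tensorHom_comp_tensorHom, ← M.assoc]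
    rw [e1]
    calc T.map (Q.δ (L.d M.A) M.A) ≫ Q.δ (T.obj (L.d M.A)) (T.obj M.A)
          ≫ ((T.μ.app (L.d M.A) ⊗ₘ T.μ.app M.A) ≫ (a ⊗ₘ M.a)) ≫ L.ev M.A
        = (T.map (Q.δ (L.d M.A) M.A) ≫ Q.δ (T.obj (L.d M.A)) (T.obj M.A)
            ≫ (T.μ.app (L.d M.A) ⊗ₘ T.μ.app M.A)) ≫ (a ⊗ₘ M.a) ≫ L.ev M.A := by
          simp only [Category.assoc]
      _ = (T.μ.app (L.d M.A ⊗ M.A) ≫ Q.δ (L.d M.A) M.A) ≫ (a ⊗ₘ M.a) ≫ L.ev M.A := by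
          rw [hB.mu_δ]
      _ = T.μ.app (L.d M.A ⊗ M.A) ≫ T.map (L.ev M.A) ≫ Q.ε := by
          rw [Category.assoc, evlin_antipode hB hs M]
      _ = T.map (T.map (L.ev M.A)) ≫ T.μ.app (𝟙_ C) ≫ Q.ε := by
          rw [← reassoc_of% (T.μ.naturality (L.ev M.A))]
      _ = T.map (T.map (L.ev M.A)) ≫ T.map Q.ε ≫ Q.ε := by rw [hB.mu_ε]
  have hcoev : T.map (T.map (L.coev M.A)) ≫ T.map (Q.δ M.A (L.d M.A))
        ≫ Q.δ (T.obj M.A) (T.obj (L.d M.A))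
        ≫ ((T.map M.a ≫ M.a) ⊗ₘ (T.map a ≫ a)) = T.map Q.ε ≫ Q.ε ≫ L.coev M.A := by
    have c1 : ((T.map M.a ≫ M.a) ⊗ₘ (T.map a ≫ a))
        = (T.map M.a ⊗ₘ T.map a) ≫ (M.a ⊗ₘ a) := by rw [tensorHom_comp_tensorHom]
    rw [c1]
    calc T.map (T.map (L.coev M.A)) ≫ T.map (Q.δ M.A (L.d M.A))
            ≫ Q.δ (T.obj M.A) (T.obj (L.d M.A))
            ≫ (T.map M.a ⊗ₘ T.map a) ≫ (M.a ⊗ₘ a)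
        = T.map (T.map (L.coev M.A)) ≫ T.map (Q.δ M.A (L.d M.A))
            ≫ (Q.δ (T.obj M.A) (T.obj (L.d M.A)) ≫ (T.map M.a ⊗ₘ T.map a))
            ≫ (M.a ⊗ₘ a) := by simp only [Category.assoc]
      _ = T.map (T.map (L.coev M.A)) ≫ T.map (Q.δ M.A (L.d M.A))
            ≫ (T.map (M.a ⊗ₘ a) ≫ Q.δ M.A (L.d M.A)) ≫ (M.a ⊗ₘ a) := by
          rw [Q.δ_natural M.a a]
      _ = T.map (T.map (L.coev M.A) ≫ Q.δ M.A (L.d M.A) ≫ (M.a ⊗ₘ a))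
            ≫ Q.δ M.A (L.d M.A) ≫ (M.a ⊗ₘ a) := by
          simp only [Functor.map_comp, Category.assoc]
      _ = T.map (Q.ε ≫ L.coev M.A) ≫ Q.δ M.A (L.d M.A) ≫ (M.a ⊗ₘ a) := by
          rw [← coevlin_antipode hB hs M]
      _ = T.map Q.ε ≫ Q.ε ≫ L.coev M.A := by
          rw [Functor.map_comp]
          simp only [Category.assoc]
          rw [← coevlin_antipode hB hs M]
  have := master (S := S) (Q.comp Q) (T.map M.a ≫ M.a) (L.ev M.A) (L.coev M.A)
    (L.ev M.A) (L.coev M.A) (T.μ.app (L.d M.A) ≫ a) (T.map a ≫ a) ?_ ?_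
  · rw [xfer_ev_coev] at this
    simpa [hS] using this.symm
  · dsimp only [Comonoidal.comp, hS, Functor.comp_map, Functor.comp_obj]
    simp only [Category.assoc]
    exact hev
  · dsimp only [Comonoidal.comp, hS, Functor.comp_map, Functor.comp_obj]
    simp only [Category.assoc]
    exact hcoev

lemma antipode_formula (hs : IsLeftAntipode T Q L s) (X : C) :
    s X = T.map (L.tr (T.μ.app X)) ≫ s (T.obj X) ≫ L.tr (T.η.app X) := by
  have h1 := hs.natural (T.η.app X)
  simp only [Functor.id_obj] at h1
  have h2 : T.map (L.tr (T.μ.app X)) ≫ T.map (L.tr (T.map (T.η.app X))) ≫ s X = s X := by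
    rw [← Functor.map_comp_assoc, ← tr_comp, T.right_unit, tr_id]
    simp
  conv_lhs => rw [← h2]
  rw [h1]

lemma antipode_unique (hB : IsBimonad T Q) {s' : ∀ X : C, T.obj (L.d (T.obj X)) ⟶ L.d X}
    (hs : IsLeftAntipode T Q L s) (hs' : IsLeftAntipode T Q L s') : s = s' := by
  funext X
  set FM : T.Algebra :=
    { A := T.obj X, a := T.μ.app X, unit := T.left_unit X, assoc := (T.assoc X).symm }
  have hev := evlin_antipode hB hs FM
  have hcoev := coevlin_antipode hB hs' FM
  have key := master (S := T.toFunctor) Q FM.a (L.ev FM.A) (L.coev FM.A)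
    (L.ev FM.A) (L.coev FM.A) (T.map (L.tr FM.a) ≫ s FM.A) (T.map (L.tr FM.a) ≫ s' FM.A)
    (by simpa only [Category.assoc] using hev)
    (by simpa only [Category.assoc] using hcoev.symm)
  rw [xfer_ev_coev] at key
  have key2 : T.map (L.tr (T.μ.app X)) ≫ s (T.obj X)
      = T.map (L.tr (T.μ.app X)) ≫ s' (T.obj X) := by
    have := key.symm
    simpa using this
  rw [antipode_formula hs, antipode_formula hs', ← Category.assoc, ← Category.assoc, key2]

end Forward
section Backward
variable {T : Monad C} {Q : Comonoidal T.toFunctor} {L : LeftDualData C}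

lemma intertwine {M M' : C} (r : T.obj M ⟶ M) (r' : T.obj M' ⟶ M')
    (aM : T.obj (L.d M) ⟶ L.d M) (aM' : T.obj (L.d M') ⟶ L.d M')
    (hevM : Q.δ (L.d M) M ≫ (aM ⊗ₘ r) ≫ L.ev M = T.map (L.ev M) ≫ Q.ε)
    (hcoevM : T.map (L.coev M) ≫ Q.δ M (L.d M) ≫ (r ⊗ₘ aM) = Q.ε ≫ L.coev M)
    (hevM' : Q.δ (L.d M') M' ≫ (aM' ⊗ₘ r') ≫ L.ev M' = T.map (L.ev M') ≫ Q.ε)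
    (φ : M ⟶ M') (hφ : T.map φ ≫ r' = r ≫ φ) :
    T.map (L.tr φ) ≫ aM = aM' ≫ L.tr φ := by
  set e : L.d M' ⊗ M ⟶ 𝟙_ C := (L.tr φ ⊗ₘ 𝟙 M) ≫ L.ev M with he
  have c1 : Q.δ (L.d M') M ≫ ((T.map (L.tr φ) ≫ aM) ⊗ₘ r) ≫ L.ev M
      = T.map e ≫ Q.ε := by
    have d1 : ((T.map (L.tr φ) ≫ aM) ⊗ₘ r)
        = (T.map (L.tr φ) ⊗ₘ T.map (𝟙 M)) ≫ (aM ⊗ₘ r) := by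
      rw [tensorHom_comp_tensorHom]; simp
    calc Q.δ (L.d M') M ≫ ((T.map (L.tr φ) ≫ aM) ⊗ₘ r) ≫ L.ev M
        = Q.δ (L.d M') M ≫ (T.map (L.tr φ) ⊗ₘ T.map (𝟙 M)) ≫ (aM ⊗ₘ r) ≫ L.ev M := by
          rw [d1]; simp only [Category.assoc]
      _ = T.map (L.tr φ ⊗ₘ 𝟙 M) ≫ Q.δ (L.d M) M ≫ (aM ⊗ₘ r) ≫ L.ev M := by
          rw [← reassoc_of% (Q.δ_natural (L.tr φ) (𝟙 M))]
      _ = T.map (L.tr φ ⊗ₘ 𝟙 M) ≫ T.map (L.ev M) ≫ Q.ε := by rw [hevM]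
      _ = T.map e ≫ Q.ε := by rw [he, Functor.map_comp]; simp only [Category.assoc]
  have c2 : Q.δ (L.d M') M ≫ ((aM' ≫ L.tr φ) ⊗ₘ r) ≫ L.ev M
      = T.map e ≫ Q.ε := by
    have d2 : ((aM' ≫ L.tr φ) ⊗ₘ r) ≫ L.ev M = (aM' ⊗ₘ r) ≫ (L.tr φ ⊗ₘ 𝟙 M) ≫ L.ev M := by
      rw [← Category.assoc, tensorHom_comp_tensorHom]; simp
    have d3 : (aM' ⊗ₘ r) ≫ (𝟙 (L.d M') ⊗ₘ φ) ≫ L.ev M'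
        = (T.map (𝟙 (L.d M')) ⊗ₘ T.map φ) ≫ (aM' ⊗ₘ r') ≫ L.ev M' := by
      rw [← Category.assoc, tensorHom_comp_tensorHom, ← Category.assoc, tensorHom_comp_tensorHom, hφ]
      simp
    have d4 : (𝟙 (L.d M') ⊗ₘ φ) ≫ L.ev M' = (L.tr φ ⊗ₘ 𝟙 M) ≫ L.ev M := (tr_ev L φ).symm
    calc Q.δ (L.d M') M ≫ ((aM' ≫ L.tr φ) ⊗ₘ r) ≫ L.ev M
        = Q.δ (L.d M') M ≫ (aM' ⊗ₘ r) ≫ (𝟙 (L.d M') ⊗ₘ φ) ≫ L.ev M' := by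
          rw [d2, tr_ev]
      _ = Q.δ (L.d M') M ≫ (T.map (𝟙 (L.d M')) ⊗ₘ T.map φ) ≫ (aM' ⊗ₘ r') ≫ L.ev M' := by
          rw [d3]
      _ = T.map (𝟙 (L.d M') ⊗ₘ φ) ≫ Q.δ (L.d M') M' ≫ (aM' ⊗ₘ r') ≫ L.ev M' := by
          rw [← reassoc_of% (Q.δ_natural (𝟙 (L.d M')) φ)]
      _ = T.map (𝟙 (L.d M') ⊗ₘ φ) ≫ T.map (L.ev M') ≫ Q.ε := by rw [hevM']
      _ = T.map ((𝟙 (L.d M') ⊗ₘ φ) ≫ L.ev M') ≫ Q.ε := by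
          rw [Functor.map_comp]; simp only [Category.assoc]
      _ = T.map e ≫ Q.ε := by rw [d4, he]
  have m1 := master (S := T.toFunctor) Q r e (L.coev M) (L.ev M) (L.coev M)
    (T.map (L.tr φ) ≫ aM) aM
    (by simpa only [Category.assoc] using c1)
    (by simpa only [Category.assoc] using hcoevM)
  have m2 := master (S := T.toFunctor) Q r e (L.coev M) (L.ev M) (L.coev M)
    (aM' ≫ L.tr φ) aM
    (by simpa only [Category.assoc] using c2)
    (by simpa only [Category.assoc] using hcoevM)
  rw [xfer_ev_coev] at m1 m2
  simp only [Category.comp_id] at m1 m2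
  rw [← m1, m2]

lemma backward_antipode (hB : IsBimonad T Q)
    (hD : ∀ M : T.Algebra, ∃ (N : T.Algebra) (e : N.A ⊗ M.A ⟶ 𝟙_ C)
          (d : 𝟙_ C ⟶ M.A ⊗ N.A),
        ((Q.δ N.A M.A ≫ (N.a ⊗ₘ M.a)) ≫ e = T.map e ≫ Q.ε) ∧
        (Q.ε ≫ d = T.map d ≫ Q.δ M.A N.A ≫ (M.a ⊗ₘ N.a)) ∧
        ((ρ_ N.A).inv ≫ (𝟙 N.A ⊗ₘ d) ≫ (α_ N.A M.A N.A).inv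
          ≫ (e ⊗ₘ 𝟙 N.A) ≫ (λ_ N.A).hom = 𝟙 N.A) ∧
        ((λ_ M.A).inv ≫ (d ⊗ₘ 𝟙 M.A) ≫ (α_ M.A N.A M.A).hom
          ≫ (𝟙 M.A ⊗ₘ e) ≫ (ρ_ M.A).hom = 𝟙 M.A)) :
    ∃ s : ∀ X : C, T.obj (L.d (T.obj X)) ⟶ L.d X, IsLeftAntipode T Q L s := by
  choose N e d hlin1 hlin2 htri1 htri2 using hD
  let u : ∀ M : T.Algebra, (N M).A ⟶ L.d M.A := fun M => xfer (e M) (L.coev M.A)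
  let v : ∀ M : T.Algebra, L.d M.A ⟶ (N M).A := fun M => xfer (L.ev M.A) (d M)
  let aM : ∀ M : T.Algebra, T.obj (L.d M.A) ⟶ L.d M.A :=
    fun M => T.map (v M) ≫ (N M).a ≫ u M
  have hzig : ∀ M : T.Algebra, zig (d M) (e M) = 𝟙 M.A := fun M => htri2 M
  have hu : ∀ M : T.Algebra, (u M ⊗ₘ 𝟙 M.A) ≫ L.ev M.A = e M := by
    intro M
    show (xfer (e M) (L.coev M.A) ⊗ₘ 𝟙 M.A) ≫ L.ev M.A = e M
    rw [xfer_pair, zig_coev_ev]; simp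
  have hI1 : ∀ M : T.Algebra, (v M ⊗ₘ 𝟙 M.A) ≫ e M = L.ev M.A := by
    intro M
    show (xfer (L.ev M.A) (d M) ⊗ₘ 𝟙 M.A) ≫ e M = L.ev M.A
    rw [xfer_pair, hzig]; simp
  have hI3 : ∀ M : T.Algebra, d M ≫ (𝟙 M.A ⊗ₘ u M) = L.coev M.A := by
    intro M
    show d M ≫ (𝟙 M.A ⊗ₘ xfer (e M) (L.coev M.A)) = L.coev M.A
    rw [copair_xfer, hzig]; simp
  have huv : ∀ M : T.Algebra, u M ≫ v M = 𝟙 (N M).A := by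
    intro M
    show xfer (e M) (L.coev M.A) ≫ xfer (L.ev M.A) (d M) = 𝟙 (N M).A
    rw [comp_xfer]
    have : (xfer (e M) (L.coev M.A) ⊗ₘ 𝟙 M.A) ≫ L.ev M.A = e M := hu M
    rw [this]
    exact htri1 M
  have hevA : ∀ M : T.Algebra,
      Q.δ (L.d M.A) M.A ≫ (aM M ⊗ₘ M.a) ≫ L.ev M.A = T.map (L.ev M.A) ≫ Q.ε := by
    intro M
    have d1 : (aM M ⊗ₘ M.a)
        = (T.map (v M) ⊗ₘ T.map (𝟙 M.A)) ≫ ((N M).a ⊗ₘ M.a) ≫ (u M ⊗ₘ 𝟙 M.A) := by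
      show (T.map (v M) ≫ (N M).a ≫ u M ⊗ₘ M.a) = _
      rw [tensorHom_comp_tensorHom, tensorHom_comp_tensorHom]; simp
    calc Q.δ (L.d M.A) M.A ≫ (aM M ⊗ₘ M.a) ≫ L.ev M.A
        = Q.δ (L.d M.A) M.A ≫ (T.map (v M) ⊗ₘ T.map (𝟙 M.A))
            ≫ ((N M).a ⊗ₘ M.a) ≫ (u M ⊗ₘ 𝟙 M.A) ≫ L.ev M.A := by
          rw [d1]; simp only [Category.assoc]
      _ = T.map (v M ⊗ₘ 𝟙 M.A) ≫ Q.δ (N M).A M.A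
            ≫ ((N M).a ⊗ₘ M.a) ≫ (u M ⊗ₘ 𝟙 M.A) ≫ L.ev M.A := by
          rw [← reassoc_of% (Q.δ_natural (v M) (𝟙 M.A))]
      _ = T.map (v M ⊗ₘ 𝟙 M.A) ≫ Q.δ (N M).A M.A ≫ ((N M).a ⊗ₘ M.a) ≫ e M := by
          rw [hu]
      _ = T.map (v M ⊗ₘ 𝟙 M.A) ≫ T.map (e M) ≫ Q.ε := by
          rw [← Category.assoc (Q.δ (N M).A M.A), hlin1 M]
      _ = T.map ((v M ⊗ₘ 𝟙 M.A) ≫ e M) ≫ Q.ε := by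
          rw [Functor.map_comp]; simp only [Category.assoc]
      _ = T.map (L.ev M.A) ≫ Q.ε := by rw [hI1]
  have hcoevA : ∀ M : T.Algebra,
      T.map (L.coev M.A) ≫ Q.δ M.A (L.d M.A) ≫ (M.a ⊗ₘ aM M) = Q.ε ≫ L.coev M.A := by
    intro M
    have d1 : (T.map (𝟙 M.A) ⊗ₘ T.map (u M)) ≫ (M.a ⊗ₘ aM M)
        = (M.a ⊗ₘ (N M).a) ≫ (𝟙 M.A ⊗ₘ u M) := by
      show (T.map (𝟙 M.A) ⊗ₘ T.map (u M)) ≫ (M.a ⊗ₘ T.map (v M) ≫ (N M).a ≫ u M) = _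
      rw [tensorHom_comp_tensorHom, tensorHom_comp_tensorHom, ← Functor.map_comp_assoc, huv]
      simp
    calc T.map (L.coev M.A) ≫ Q.δ M.A (L.d M.A) ≫ (M.a ⊗ₘ aM M)
        = T.map (d M) ≫ T.map (𝟙 M.A ⊗ₘ u M) ≫ Q.δ M.A (L.d M.A) ≫ (M.a ⊗ₘ aM M) := by
          rw [← Functor.map_comp_assoc, hI3]
      _ = T.map (d M) ≫ Q.δ M.A (N M).A ≫ (T.map (𝟙 M.A) ⊗ₘ T.map (u M))
            ≫ (M.a ⊗ₘ aM M) := by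
          rw [reassoc_of% (Q.δ_natural (𝟙 M.A) (u M))]
      _ = T.map (d M) ≫ Q.δ M.A (N M).A ≫ (M.a ⊗ₘ (N M).a) ≫ (𝟙 M.A ⊗ₘ u M) := by
          rw [d1]
      _ = Q.ε ≫ d M ≫ (𝟙 M.A ⊗ₘ u M) := by
          rw [← reassoc_of% (hlin2 M)]
      _ = Q.ε ≫ L.coev M.A := by rw [hI3]
  let F : C → T.Algebra := fun X =>
    { A := T.obj X, a := T.μ.app X, unit := T.left_unit X, assoc := (T.assoc X).symm }
  have hevF : ∀ X : C, Q.δ (L.d (T.obj X)) (T.obj X) ≫ (aM (F X) ⊗ₘ T.μ.app X)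
      ≫ L.ev (T.obj X) = T.map (L.ev (T.obj X)) ≫ Q.ε := fun X => hevA (F X)
  have hcoevF : ∀ X : C, T.map (L.coev (T.obj X)) ≫ Q.δ (T.obj X) (L.d (T.obj X))
      ≫ (T.μ.app X ⊗ₘ aM (F X)) = Q.ε ≫ L.coev (T.obj X) := fun X => hcoevA (F X)
  refine ⟨fun X => aM (F X) ≫ L.tr (T.η.app X), ?_⟩
  have inter : ∀ (X Y : C) (φ : T.obj X ⟶ T.obj Y)
      (hφ : T.map φ ≫ T.μ.app Y = T.μ.app X ≫ φ),
      T.map (L.tr φ) ≫ aM (F X) = aM (F Y) ≫ L.tr φ := by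
    intro X Y φ hφ
    exact intertwine (T.μ.app X) (T.μ.app Y) (aM (F X)) (aM (F Y))
      (hevA (F X)) (hcoevA (F X)) (hevA (F Y)) φ hφ
  have key2 : ∀ X : C, T.map (L.tr (T.μ.app X)) ≫ aM (F (T.obj X))
      ≫ L.tr (T.η.app (T.obj X)) = aM (F X) := by
    intro X
    have h1 := inter (T.obj X) X (T.μ.app X) (T.assoc X)
    rw [← Category.assoc, h1, Category.assoc, ← tr_comp, T.left_unit, tr_id]
    exact Category.comp_id _
  constructor
  · -- naturality
    intro X Y f
    have h1 := inter X Y (T.map f) (by simpa using (T.μ.naturality f))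
    have h2 : T.η.app X ≫ T.map f = f ≫ T.η.app Y := by
      simpa using (T.η.naturality f).symm
    rw [← Category.assoc, h1, Category.assoc, ← tr_comp, h2, tr_comp]
    simp only [Category.assoc]
  · -- lant1
    intro X
    rw [key2 X]
    have d1 : (aM (F X) ⊗ₘ 𝟙 (T.obj X))
        = (T.map (𝟙 (L.d (T.obj X))) ⊗ₘ T.map (T.η.app X)) ≫ (aM (F X) ⊗ₘ T.μ.app X) := by
      rw [tensorHom_comp_tensorHom, T.right_unit]; simp
    calc T.map (L.tr (T.η.app X) ⊗ₘ 𝟙 X) ≫ T.map (L.ev X) ≫ Q.ε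
        = T.map ((L.tr (T.η.app X) ⊗ₘ 𝟙 X) ≫ L.ev X) ≫ Q.ε := by
          rw [Functor.map_comp]; simp only [Category.assoc]
      _ = T.map ((𝟙 (L.d (T.obj X)) ⊗ₘ T.η.app X) ≫ L.ev (T.obj X)) ≫ Q.ε := by
          rw [tr_ev]
      _ = T.map (𝟙 (L.d (T.obj X)) ⊗ₘ T.η.app X) ≫ T.map (L.ev (T.obj X)) ≫ Q.ε := by
          rw [Functor.map_comp]; simp only [Category.assoc]
      _ = T.map (𝟙 (L.d (T.obj X)) ⊗ₘ T.η.app X) ≫ Q.δ (L.d (T.obj X)) (T.obj X)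
            ≫ (aM (F X) ⊗ₘ T.μ.app X) ≫ L.ev (T.obj X) := by
          rw [← hevF X]
      _ = Q.δ (L.d (T.obj X)) X ≫ (T.map (𝟙 (L.d (T.obj X))) ⊗ₘ T.map (T.η.app X))
            ≫ (aM (F X) ⊗ₘ T.μ.app X) ≫ L.ev (T.obj X) := by
          rw [reassoc_of% (Q.δ_natural (𝟙 (L.d (T.obj X))) (T.η.app X))]
      _ = Q.δ (L.d (T.obj X)) X ≫ (aM (F X) ⊗ₘ 𝟙 (T.obj X)) ≫ L.ev (T.obj X) := by
          rw [d1]; simp only [Category.assoc]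
  · -- lant2
    intro X
    have d1 : (T.μ.app X ⊗ₘ (aM (F X) ≫ L.tr (T.η.app X)))
        = (T.μ.app X ⊗ₘ aM (F X)) ≫ (𝟙 (T.obj X) ⊗ₘ L.tr (T.η.app X)) := by
      rw [tensorHom_comp_tensorHom]; simp
    calc Q.ε ≫ L.coev X ≫ (T.η.app X ⊗ₘ 𝟙 (L.d X))
        = Q.ε ≫ L.coev (T.obj X) ≫ (𝟙 (T.obj X) ⊗ₘ L.tr (T.η.app X)) := by
          rw [coev_tr]
      _ = (T.map (L.coev (T.obj X)) ≫ Q.δ (T.obj X) (L.d (T.obj X))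
            ≫ (T.μ.app X ⊗ₘ aM (F X))) ≫ (𝟙 (T.obj X) ⊗ₘ L.tr (T.η.app X)) := by
          rw [← reassoc_of% (hcoevF X)]; simp only [Category.assoc]
      _ = _ := by rw [d1]; simp only [Category.assoc]

end Backward

/-- For a bimonad `T` on a left autonomous category `C` (with chosen
left duals `L`): `T` admits a left antipode iff every `T`-module has a left dual in
the monoidal category of `T`-modules; a left antipode is unique; and in terms of a
left antipode `s^l`, the left dual of a `T`-module `(M,r)` is
`(ˡM, s^l_M ∘ T(ˡr))` with evaluation `ev_M` and coevaluation `coev_M`. -/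
theorem stmt7 (T : Monad C) (Q : Comonoidal T.toFunctor) (hB : IsBimonad T Q)
    (L : LeftDualData C) :
    ((∃ s : ∀ X : C, T.obj (L.d (T.obj X)) ⟶ L.d X, IsLeftAntipode T Q L s) ↔
      (∀ M : T.Algebra, ∃ (N : T.Algebra) (e : N.A ⊗ M.A ⟶ 𝟙_ C)
          (d : 𝟙_ C ⟶ M.A ⊗ N.A),
        -- `e` and `d` are morphisms of `T`-modules
        ((Q.δ N.A M.A ≫ (N.a ⊗ₘ M.a)) ≫ e = T.map e ≫ Q.ε) ∧
        (Q.ε ≫ d = T.map d ≫ Q.δ M.A N.A ≫ (M.a ⊗ₘ N.a)) ∧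
        -- triangle identities: `(N, e, d)` is a left dual of `M`
        ((ρ_ N.A).inv ≫ (𝟙 N.A ⊗ₘ d) ≫ (α_ N.A M.A N.A).inv
          ≫ (e ⊗ₘ 𝟙 N.A) ≫ (λ_ N.A).hom = 𝟙 N.A) ∧
        ((λ_ M.A).inv ≫ (d ⊗ₘ 𝟙 M.A) ≫ (α_ M.A N.A M.A).hom
          ≫ (𝟙 M.A ⊗ₘ e) ≫ (ρ_ M.A).hom = 𝟙 M.A))) ∧
    (∀ s s' : ∀ X : C, T.obj (L.d (T.obj X)) ⟶ L.d X,
      IsLeftAntipode T Q L s → IsLeftAntipode T Q L s' → s = s') ∧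
    (∀ s : ∀ X : C, T.obj (L.d (T.obj X)) ⟶ L.d X, IsLeftAntipode T Q L s →
      ∀ M : T.Algebra,
        -- `(ˡM, s^l_M ∘ T(ˡr))` is a `T`-module ...
        (T.η.app (L.d M.A) ≫ T.map (L.tr M.a) ≫ s M.A = 𝟙 (L.d M.A)) ∧
        (T.μ.app (L.d M.A) ≫ T.map (L.tr M.a) ≫ s M.A
          = T.map (T.map (L.tr M.a) ≫ s M.A) ≫ T.map (L.tr M.a) ≫ s M.A) ∧
        -- ... and `ev_M`, `coev_M` are `T`-linear, so it is a left dual of `(M,r)`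
        ((Q.δ (L.d M.A) M.A ≫ ((T.map (L.tr M.a) ≫ s M.A) ⊗ₘ M.a)) ≫ L.ev M.A
          = T.map (L.ev M.A) ≫ Q.ε) ∧
        (Q.ε ≫ L.coev M.A
          = T.map (L.coev M.A) ≫ Q.δ M.A (L.d M.A)
              ≫ (M.a ⊗ₘ (T.map (L.tr M.a) ≫ s M.A)))) := by
  refine ⟨⟨?_, ?_⟩, ?_, ?_⟩
  · rintro ⟨s, hs⟩ M
    refine ⟨{ A := L.d M.A, a := T.map (L.tr M.a) ≫ s M.A,
              unit := unit_antipode hB hs M, assoc := assoc_antipode hB hs M },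
            L.ev M.A, L.coev M.A, ?_, ?_, L.tri1 M.A, L.tri2 M.A⟩
    · simpa only [Category.assoc] using evlin_antipode hB hs M
    · exact coevlin_antipode hB hs M
  · exact backward_antipode hB
  · intro s s' hs hs'
    exact antipode_unique hB hs hs'
  · intro s hs M
    exact ⟨unit_antipode hB hs M, assoc_antipode hB hs M,
      by simpa only [Category.assoc] using evlin_antipode hB hs M,
      coevlin_antipode hB hs M⟩

end HopfMonadPaper
end
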